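/- arXiv:2205.03161 — 6 statements merged into one kernel-verified Lean document; each statement's English description precedes it below -/
import Mathlib

section
/- For real a > 0, y > 0, and real η > 0, ∫₀^∞ x^{η-1} e^{-ax} cos(xy) dx = Γ(η) (a² + y²)^{-η/2} cos(η arctan(y/a)). -/
open Real Set MeasureTheory Filter Topology


lemma aux_int {t c : ℝ} (ht : -1 < t) (hc : 0 < c) :
    IntegrableOn (fun x : ℝ => x ^ t * Real.exp (-(c * x))) (Ioi 0) := by
  have h := integrableOn_rpow_mul_exp_neg_mul_rpow ht one_pos hc
  refine h.congr_fun (fun x hx => ?_) measurableSet_Ioi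
  dsimp only; rw [Real.rpow_one, neg_mul]

lemma aux_meas (η : ℝ) (s : ℂ) :
    AEStronglyMeasurable (fun x : ℝ => (x:ℂ) ^ ((η:ℂ) - 1) * Complex.exp (-(s * x)))
      (volume.restrict (Ioi 0)) := by
  apply ContinuousOn.aestronglyMeasurable _ measurableSet_Ioi
  apply ContinuousOn.mul
  · intro x hx
    refine ((Complex.continuous_ofReal.continuousAt).cpow continuousAt_const ?_).continuousWithinAt
    exact Or.inl (by simpa using hx)
  · exact (Complex.continuous_exp.comp
      ((continuous_const.mul Complex.continuous_ofReal).neg)).continuousOn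

lemma aux_norm {η : ℝ} {s : ℂ} {x : ℝ} (hx : 0 < x) :
    ‖(x:ℂ) ^ ((η:ℂ) - 1) * Complex.exp (-(s * x))‖
      = x ^ (η - 1) * Real.exp (-(s.re * x)) := by
  rw [norm_mul,
    Complex.norm_cpow_eq_rpow_re_of_pos hx, Complex.norm_exp]
  simp [Complex.mul_re]

lemma aux_integrable {η : ℝ} (hη : 0 < η) {s : ℂ} (hs : 0 < s.re) :
    IntegrableOn (fun x : ℝ => (x:ℂ) ^ ((η:ℂ) - 1) * Complex.exp (-(s * x))) (Ioi 0) := by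
  refine Integrable.mono' (aux_int (show (-1:ℝ) < η - 1 by linarith) hs) (aux_meas η s) ?_
  filter_upwards [ae_restrict_mem measurableSet_Ioi] with x hx
  rw [aux_norm hx]

lemma aux_diff {η : ℝ} (hη : 0 < η) {s₀ : ℂ} (hs₀ : 0 < s₀.re) :
    DifferentiableAt ℂ
      (fun s : ℂ => ∫ x in Ioi (0:ℝ), (x:ℂ) ^ ((η:ℂ) - 1) * Complex.exp (-(s * x))) s₀ := by
  set F : ℂ → ℝ → ℂ := fun s x => (x:ℂ) ^ ((η:ℂ) - 1) * Complex.exp (-(s * x)) with hF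
  set F' : ℂ → ℝ → ℂ := fun s x => (x:ℂ) ^ ((η:ℂ) - 1) * (Complex.exp (-(s * x)) * -(x:ℂ))
    with hF'
  have hε : 0 < s₀.re / 2 := by linarith
  have key := hasDerivAt_integral_of_dominated_loc_of_deriv_le (μ := volume.restrict (Ioi 0))
    (F := F) (F' := F') (x₀ := s₀) (bound := fun x => x ^ η * Real.exp (-(s₀.re / 2 * x)))
    (Metric.ball_mem_nhds s₀ hε) (Eventually.of_forall fun s => aux_meas η s) (aux_integrable hη hs₀)
    ?_ ?_ (aux_int (by linarith) hε) ?_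
  · exact key.2.differentiableAt
  · -- measurability of F' s₀
    apply ContinuousOn.aestronglyMeasurable _ measurableSet_Ioi
    apply ContinuousOn.mul
    · intro x hx
      refine ((Complex.continuous_ofReal.continuousAt).cpow continuousAt_const
        ?_).continuousWithinAt
      exact Or.inl (by simpa using hx)
    · exact ((Complex.continuous_exp.comp
        ((continuous_const.mul Complex.continuous_ofReal).neg)).mul
        (Complex.continuous_ofReal.neg)).continuousOn
  · -- bound
    filter_upwards [ae_restrict_mem measurableSet_Ioi] with x hx s hs
    have hx' : (0:ℝ) < x := hx
    have hre : s₀.re / 2 ≤ s.re := by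
      have : |s.re - s₀.re| ≤ ‖s - s₀‖ := by
        simpa using Complex.abs_re_le_norm (s - s₀)
      have h2 : ‖s - s₀‖ < s₀.re / 2 := by simpa [Metric.mem_ball, dist_eq_norm] using hs
      have := (abs_lt.mp (lt_of_le_of_lt this h2)).1
      linarith
    have : ‖F' s x‖ = x ^ (η - 1) * Real.exp (-(s.re * x)) * x := by
      simp only [hF', norm_mul, Complex.norm_cpow_eq_rpow_re_of_pos hx',
        Complex.norm_exp, norm_neg, Complex.norm_real, Real.norm_eq_abs, abs_of_pos hx']
      simp [Complex.mul_re, mul_assoc]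
    rw [this]
    have hxpow : x ^ (η - 1) * x = x ^ η := by
      rw [← Real.rpow_add_one hx'.ne' (η - 1)]; ring_nf
    calc x ^ (η - 1) * Real.exp (-(s.re * x)) * x
        = x ^ η * Real.exp (-(s.re * x)) := by rw [mul_right_comm, hxpow]
      _ ≤ x ^ η * Real.exp (-(s₀.re / 2 * x)) := by
          have hb : Real.exp (-(s.re * x)) ≤ Real.exp (-(s₀.re / 2 * x)) :=
            Real.exp_le_exp.mpr (by nlinarith)
          exact mul_le_mul_of_nonneg_left hb (Real.rpow_nonneg hx'.le _)
  · -- differentiability in s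
    filter_upwards [ae_restrict_mem measurableSet_Ioi] with x hx s hs
    have h1 : HasDerivAt (fun s : ℂ => -(s * x)) (-(x:ℂ)) s := by
      simpa [Pi.neg_def] using ((hasDerivAt_id s).mul_const (x:ℂ)).neg
    simpa [hF, hF', mul_comm] using (h1.cexp).const_mul ((x:ℂ) ^ ((η:ℂ) - 1))

lemma key {η : ℝ} (hη : 0 < η) {s : ℂ} (hs : 0 < s.re) :
    (∫ x in Ioi (0:ℝ), (x:ℂ) ^ ((η:ℂ) - 1) * Complex.exp (-(s * x)))
      = Complex.Gamma η * s ^ (-(η:ℂ)) := by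
  set U : Set ℂ := {z : ℂ | 0 < z.re} with hUdef
  have hUopen : IsOpen U := isOpen_lt continuous_const Complex.continuous_re
  have hUpre : IsPreconnected U := (convex_halfSpace_re_gt 0).isPreconnected
  set f : ℂ → ℂ := fun s => ∫ x in Ioi (0:ℝ), (x:ℂ) ^ ((η:ℂ) - 1) * Complex.exp (-(s * x))
  set g : ℂ → ℂ := fun s => Complex.Gamma η * s ^ (-(η:ℂ))
  have hfd : DifferentiableOn ℂ f U := fun z hz => (aux_diff hη hz).differentiableWithinAt
  have hf : AnalyticOnNhd ℂ f U := hfd.analyticOnNhd hUopen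
  have hgd : DifferentiableOn ℂ g U := fun z hz =>
    ((differentiableAt_id.cpow (differentiableAt_const _) (Or.inl hz)).const_mul
      _).differentiableWithinAt
  have hg : AnalyticOnNhd ℂ g U := hgd.analyticOnNhd hUopen
  have hreal : ∀ r : ℝ, 0 < r → f r = g r := by
    intro r hr
    have h1 := Complex.integral_cpow_mul_exp_neg_mul_Ioi
      (a := (η:ℂ)) (r := r) (by simpa using hη) hr
    have harg : Complex.arg r ≠ π := by
      rw [Complex.arg_ofReal_of_nonneg hr.le]; exact Real.pi_ne_zero.symm
    calc f r = (1 / (r:ℂ)) ^ (η:ℂ) * Complex.Gamma η := h1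
      _ = g r := by
          rw [one_div, Complex.inv_cpow _ _ harg, ← Complex.cpow_neg, mul_comm]
  have h1U : (1:ℂ) ∈ U := by simp [hUdef]
  have htend : Tendsto (fun r : ℝ => (r:ℂ)) (𝓝[>] (1:ℝ)) (𝓝[≠] (1:ℂ)) := by
    apply tendsto_nhdsWithin_of_tendsto_nhds_of_eventually_within
    · exact (Complex.continuous_ofReal.tendsto 1).mono_left nhdsWithin_le_nhds
    · filter_upwards [self_mem_nhdsWithin] with r hr
      simp only [mem_compl_iff, mem_singleton_iff, Complex.ofReal_eq_one]
      exact ne_of_gt hr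
  have hfreq : ∃ᶠ z in 𝓝[≠] (1:ℂ), f z = g z := by
    apply htend.frequently
    apply Eventually.frequently
    filter_upwards [self_mem_nhdsWithin] with r hr
    exact hreal r (lt_trans one_pos hr)
  exact hf.eqOn_of_preconnected_of_frequently_eq hg hUpre h1U hfreq hs

theorem stmt3 (a y η : ℝ) (ha : 0 < a) (hy : 0 < y) (hη : 0 < η) :
    (∫ x in Ioi (0 : ℝ), x ^ (η - 1) * Real.exp (-(a * x)) * Real.cos (x * y)) =
      Real.Gamma η * (a ^ 2 + y ^ 2) ^ (-η / 2) * Real.cos (η * Real.arctan (y / a)) := by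
  set z : ℂ := (a:ℂ) + (y:ℂ) * Complex.I with hzdef
  have hzre : z.re = a := by simp [hzdef]
  have hzim : z.im = y := by simp [hzdef]
  have hzre' : 0 < z.re := by rw [hzre]; exact ha
  have hz0 : z ≠ 0 := by
    intro h; rw [h] at hzre'; simp at hzre'
  have hk := key hη hzre'
  -- take real parts
  have hL : (∫ x in Ioi (0:ℝ), (x:ℂ) ^ ((η:ℂ) - 1) * Complex.exp (-(z * x))).re
      = ∫ x in Ioi (0:ℝ), x ^ (η - 1) * Real.exp (-(a * x)) * Real.cos (x * y) := by
    rw [show (∫ x in Ioi (0:ℝ), (x:ℂ) ^ ((η:ℂ) - 1) * Complex.exp (-(z * x))).re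
        = RCLike.re (∫ x in Ioi (0:ℝ), (x:ℂ) ^ ((η:ℂ) - 1) * Complex.exp (-(z * x))) from rfl,
      ← integral_re (aux_integrable hη hzre')]
    refine setIntegral_congr_fun measurableSet_Ioi (fun x hx => ?_)
    have hx' : (0:ℝ) < x := hx
    have h1 : (x:ℂ) ^ ((η:ℂ) - 1) = ((x ^ (η - 1) : ℝ) : ℂ) := by
      rw [Complex.ofReal_cpow hx'.le]; push_cast; ring_nf
    rw [h1, show RCLike.re (((x ^ (η - 1) : ℝ):ℂ) * Complex.exp (-(z * x)))
        = (((x ^ (η - 1) : ℝ):ℂ) * Complex.exp (-(z * x))).re from rfl,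
      Complex.re_ofReal_mul, Complex.exp_re]
    have hre : (-(z * x)).re = -(a * x) := by simp [Complex.mul_re, hzre, hzim]
    have him : (-(z * x)).im = -(y * x) := by simp [Complex.mul_re, Complex.mul_im, hzre, hzim]
    rw [hre, him, Real.cos_neg, mul_assoc, mul_comm y x]
  have hR : (Complex.Gamma η * z ^ (-(η:ℂ))).re
      = Real.Gamma η * (a ^ 2 + y ^ 2) ^ (-η / 2) * Real.cos (η * Real.arctan (y / a)) := by
    rw [Complex.Gamma_ofReal, Complex.re_ofReal_mul]
    have harg : Complex.arg z = Real.arctan (y / a) := by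
      have h1 : Real.tan (Complex.arg z) = y / a := by
        rw [Complex.tan_arg, hzre, hzim]
      have h2 : |Complex.arg z| < π / 2 :=
        Complex.abs_arg_lt_pi_div_two_iff.mpr (Or.inl hzre')
      rw [← h1, Real.arctan_tan (abs_lt.mp h2).1 (abs_lt.mp h2).2]
    have habs : ‖z‖ = Real.sqrt (a ^ 2 + y ^ 2) := Complex.norm_add_mul_I a y
    have hcpow : (z ^ (-(η:ℂ))).re = (a ^ 2 + y ^ 2) ^ (-η / 2) * Real.cos (η * Real.arctan (y / a)) := by
      rw [Complex.cpow_def_of_ne_zero hz0, Complex.exp_re]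
      have hre2 : (Complex.log z * -(η:ℂ)).re = Real.log (‖z‖) * (-η) := by
        simp [Complex.mul_re, Complex.log_re]
      have him2 : (Complex.log z * -(η:ℂ)).im = Complex.arg z * (-η) := by
        simp [Complex.mul_im, Complex.log_im]
      rw [hre2, him2, ← Real.rpow_def_of_pos (by rw [habs]; positivity),
        habs, Real.sqrt_eq_rpow, ← Real.rpow_mul (by positivity)]
      have : (1/2) * (-η) = -η / 2 := by ring
      rw [this, harg]
      congr 1
      rw [show Real.arctan (y / a) * -η = -(η * Real.arctan (y / a)) by ring, Real.cos_neg]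
    rw [hcpow, mul_assoc]
  rw [← hL, hk, hR]
end

section
/- For real a > 0, y > 0, and real η > -1 with η ≠ 0, ∫₀^∞ x^{η-1} e^{-ax} sin(xy) dx = Γ(η) (a² + y²)^{-η/2} sin(η arctan(y/a)). -/
open Real Set

section Stmt4Aux

open MeasureTheory Filter
open scoped Topology

lemma integrable_cpow_exp (c : ℂ) (hc : -1 < c.re) {z : ℂ} (hz : 0 < z.re) :
    IntegrableOn (fun t : ℝ => (t : ℂ) ^ c * Complex.exp (-(z * t))) (Ioi 0) := by
  have hb : IntegrableOn (fun t : ℝ => t ^ c.re * Real.exp (-z.re * t)) (Ioi 0) := by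
    have := integrableOn_rpow_mul_exp_neg_mul_rpow hc one_pos hz
    simpa [Real.rpow_one] using this
  refine hb.mono' ?_ ?_
  · apply ContinuousOn.aestronglyMeasurable ?_ measurableSet_Ioi
    apply ContinuousOn.mul
    · intro t ht
      exact (Complex.continuousAt_ofReal_cpow_const t c (Or.inr (ne_of_gt ht))).continuousWithinAt
    · exact (Complex.continuous_exp.comp (by continuity)).continuousOn
  · filter_upwards [ae_restrict_mem measurableSet_Ioi] with t ht
    rw [norm_mul,
      Complex.norm_cpow_eq_rpow_re_of_pos ht, Complex.norm_exp]
    simp [neg_mul]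

lemma ibp (σ : ℝ) (hσ : 0 < σ) {z : ℂ} (hz : 0 < z.re) :
    ∫ t in Ioi (0:ℝ), (t : ℂ) ^ (σ : ℂ) * Complex.exp (-(z * t)) =
      (σ / z) * ∫ t in Ioi (0:ℝ), (t : ℂ) ^ ((σ : ℂ) - 1) * Complex.exp (-(z * t)) := by
  have hσ0 : (σ : ℂ) ≠ 0 := by exact_mod_cast hσ.ne'
  have hz0 : z ≠ 0 := fun h => by simp [h] at hz
  set f : ℝ → ℂ := fun t => (t : ℂ) ^ (σ : ℂ) * Complex.exp (-(z * t)) with hf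
  set g : ℝ → ℂ := fun t =>
    (σ : ℂ) * ((t : ℂ) ^ ((σ:ℂ) - 1) * Complex.exp (-(z * t)))
      + (-z) * ((t : ℂ) ^ (σ : ℂ) * Complex.exp (-(z * t))) with hg
  -- derivative
  have hderiv : ∀ t ∈ Ioi (0:ℝ), HasDerivAt f (g t) t := by
    intro t ht
    have h1 : HasDerivAt (fun s : ℝ => (s : ℂ) ^ (σ:ℂ)) ((σ:ℂ) * (t:ℂ) ^ ((σ:ℂ) - 1)) t := by
      have hne : ((σ:ℂ) - 1) ≠ -1 := by
        intro h
        apply hσ0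
        have : (σ:ℂ) = 0 := by linear_combination h
        exact this
      have := hasDerivAt_ofReal_cpow_const' (ne_of_gt ht) hne
      rw [sub_add_cancel] at this
      have h2 := this.const_mul (σ:ℂ)
      have h3 : (fun s : ℝ => (σ:ℂ) * ((s:ℂ) ^ (σ:ℂ) / (σ:ℂ))) = fun s : ℝ => (s:ℂ) ^ (σ:ℂ) := by
        funext s; field_simp
      rw [h3] at h2
      convert h2 using 1
    have h2 : HasDerivAt (fun s : ℝ => Complex.exp (-(z * s))) (-z * Complex.exp (-(z * t))) t := by
      have hb : HasDerivAt (fun s : ℝ => -(z * (s:ℂ))) (-z) t := by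
        have := (Complex.ofRealCLM.hasDerivAt (x := t)).const_mul z
        exact this.neg.congr_deriv (by simp)
      have := hb.cexp
      convert this using 1
      ring
    have := h1.mul h2
    exact this.congr_deriv (by rw [hg]; ring)
  -- continuity at 0
  have hcont : ContinuousWithinAt f (Ici 0) 0 := by
    have heq : ∀ t ∈ Ici (0:ℝ), ((t ^ σ : ℝ) : ℂ) * Complex.exp (-(z * t)) = f t := by
      intro t ht
      rw [hf]
      simp only []
      rw [Complex.ofReal_cpow ht]
    have hc : ContinuousWithinAt (fun t : ℝ => ((t ^ σ : ℝ) : ℂ) * Complex.exp (-(z * t)))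
        (Ici 0) 0 := by
      apply ContinuousWithinAt.mul
      · exact (Complex.continuous_ofReal.continuousAt.comp
          (Real.continuousAt_rpow_const 0 σ (Or.inr hσ.le))).continuousWithinAt
      · exact (Complex.continuous_exp.comp (by continuity)).continuousWithinAt
    exact hc.congr (fun t ht => (heq t ht).symm) (by simpa using (heq 0 self_mem_Ici).symm)
  -- tendsto 0 at top
  have htop : Tendsto f atTop (nhds 0) := by
    rw [tendsto_zero_iff_norm_tendsto_zero]
    have hbd : ∀ᶠ t : ℝ in atTop, ‖f t‖ = t ^ σ * Real.exp (-z.re * t) := by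
      filter_upwards [eventually_gt_atTop (0:ℝ)] with t ht
      rw [hf]
      simp only []
      rw [norm_mul,
        Complex.norm_cpow_eq_rpow_re_of_pos ht, Complex.norm_exp]
      simp [neg_mul]
    rw [tendsto_congr' hbd]
    exact tendsto_rpow_mul_exp_neg_mul_atTop_nhds_zero σ z.re hz
  -- integrability of g
  have hint1 := integrable_cpow_exp ((σ:ℂ) - 1) (by simpa using hσ) hz
  have hint2 := integrable_cpow_exp (σ:ℂ) (by simp; linarith) hz
  have hgint : IntegrableOn g (Ioi 0) := (hint1.const_mul _).add (hint2.const_mul _)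
  have h0 : f 0 = 0 := by
    rw [hf]; simp [Complex.zero_cpow hσ0]
  have := MeasureTheory.integral_Ioi_of_hasDerivAt_of_tendsto hcont hderiv hgint htop
  rw [h0, sub_zero] at this
  -- this : ∫ g = 0
  rw [hg] at this
  rw [MeasureTheory.integral_add (hint1.const_mul _) (hint2.const_mul _),
    MeasureTheory.integral_const_mul, MeasureTheory.integral_const_mul] at this
  show (∫ t in Ioi (0:ℝ), (t : ℂ) ^ (σ : ℂ) * Complex.exp (-(z * t))) = _
  field_simp
  linear_combination (-1 : ℂ) * this

lemma key_s4 (σ : ℝ) (hσ : 0 < σ) (a : ℝ) (ha : 0 < a) (y : ℝ) :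
    ∫ t in Ioi (0:ℝ), (t : ℂ) ^ ((σ : ℂ) - 1) *
        Complex.exp (-(((a : ℂ) - y * Complex.I) * t)) =
      Complex.Gamma σ * ((a : ℂ) - y * Complex.I) ^ (-(σ : ℂ)) := by
  have hre : ∀ x : ℝ, ((a : ℂ) - x * Complex.I).re = a := by intro x; simp
  have hz0 : ∀ x : ℝ, ((a : ℂ) - x * Complex.I) ≠ 0 := by
    intro x h
    have := hre x
    rw [h] at this
    simp at this
    exact ha.ne this
  set g : ℝ → ℂ := fun u => ∫ t in Ioi (0:ℝ), (t : ℂ) ^ ((σ : ℂ) - 1) *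
      Complex.exp (-(((a : ℂ) - u * Complex.I) * t)) with hgdef
  -- derivative of g
  have hg' : ∀ u : ℝ, HasDerivAt g
      (Complex.I * ((σ : ℂ) / ((a : ℂ) - u * Complex.I)) * g u) u := by
    intro u
    have hmain := hasDerivAt_integral_of_dominated_loc_of_deriv_le
      (F := fun (x : ℝ) (t : ℝ) => (t : ℂ) ^ ((σ : ℂ) - 1) *
          Complex.exp (-(((a : ℂ) - x * Complex.I) * t)))
      (F' := fun (x : ℝ) (t : ℝ) => Complex.I *
          ((t : ℂ) ^ (σ : ℂ) * Complex.exp (-(((a : ℂ) - x * Complex.I) * t))))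
      (x₀ := u) (bound := fun t => t ^ σ * Real.exp (-(a * t)))
      (μ := volume.restrict (Ioi 0)) (s := Metric.ball u 1) (Metric.ball_mem_nhds u one_pos)
      ?_ ?_ ?_ ?_ ?_ ?_
    · obtain ⟨-, hd⟩ := hmain
      have heq : (∫ t in Ioi (0:ℝ), Complex.I *
          ((t : ℂ) ^ (σ : ℂ) * Complex.exp (-(((a : ℂ) - u * Complex.I) * t)))) =
          Complex.I * ((σ : ℂ) / ((a : ℂ) - u * Complex.I)) * g u := by
        rw [MeasureTheory.integral_const_mul, ibp σ hσ (by rw [hre u]; exact ha), hgdef]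
        ring
      rw [heq] at hd
      exact hd
    · filter_upwards with x
      exact (integrable_cpow_exp ((σ:ℂ) - 1) (by simpa using hσ)
        (by rw [hre x]; exact ha)).aestronglyMeasurable
    · exact integrable_cpow_exp ((σ:ℂ) - 1) (by simpa using hσ) (by rw [hre u]; exact ha)
    · exact ((integrable_cpow_exp (σ:ℂ) (by simp; linarith)
        (by rw [hre u]; exact ha)).const_mul _).aestronglyMeasurable
    · filter_upwards [ae_restrict_mem measurableSet_Ioi] with t ht x _
      have : ‖Complex.I * ((t : ℂ) ^ (σ : ℂ) *
          Complex.exp (-(((a : ℂ) - x * Complex.I) * t)))‖ = t ^ σ * Real.exp (-(a * t)) := by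
        rw [norm_mul, norm_mul,
          Complex.norm_I, one_mul, Complex.norm_cpow_eq_rpow_re_of_pos ht, Complex.norm_exp]
        simp [Complex.mul_re]
      exact le_of_eq this
    · have : IntegrableOn (fun t : ℝ => t ^ σ * Real.exp (-(a * t))) (Ioi 0) := by
        have := integrableOn_rpow_mul_exp_neg_mul_rpow (by linarith : (-1:ℝ) < σ) one_pos ha
        simpa [Real.rpow_one, neg_mul] using this
      exact this
    · filter_upwards [ae_restrict_mem measurableSet_Ioi] with t ht x _
      have ht0 : (t : ℂ) ≠ 0 := by exact_mod_cast (ne_of_gt ht)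
      have hb : HasDerivAt (fun v : ℝ => -(((a : ℂ) - v * Complex.I) * t))
          (Complex.I * t) x := by
        have h1 := ((Complex.ofRealCLM.hasDerivAt (x := x)).mul_const Complex.I).mul_const (t:ℂ)
        have h2 := h1.sub_const ((a:ℂ) * t)
        simp only [Complex.ofRealCLM_apply] at h2
        have h3 : (fun v : ℝ => (v:ℂ) * Complex.I * t - (a:ℂ) * t) =
            fun v : ℝ => -(((a : ℂ) - v * Complex.I) * t) := by
          funext v; push_cast; ring
        rw [h3] at h2
        exact h2.congr_deriv (by simp)
      have h4 := (hb.cexp).const_mul ((t : ℂ) ^ ((σ : ℂ) - 1))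
      refine h4.congr_deriv ?_
      rw [Complex.cpow_sub _ _ ht0, Complex.cpow_one]
      field_simp
  -- the function Φ
  set Φ : ℝ → ℂ := fun u => ((a : ℂ) - u * Complex.I) ^ (σ : ℂ) * g u with hΦdef
  have hΦ' : ∀ u : ℝ, HasDerivAt Φ 0 u := by
    intro u
    have hzy : HasDerivAt (fun v : ℝ => (a : ℂ) - v * Complex.I) (-Complex.I) u := by
      have h1 := ((Complex.ofRealCLM.hasDerivAt (x := u)).mul_const Complex.I).const_sub ((a:ℂ))
      simp only [Complex.ofRealCLM_apply] at h1
      exact h1.congr_deriv (by simp)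
    have hslit : ((a : ℂ) - u * Complex.I) ∈ Complex.slitPlane :=
      Complex.mem_slitPlane_iff.2 (Or.inl (by rw [hre u]; exact ha))
    have hc := (Complex.hasStrictDerivAt_cpow_const (c := (σ:ℂ)) hslit).hasDerivAt
    have hcomp := (hc.hasFDerivAt.restrictScalars ℝ).comp_hasDerivAt u hzy
    have hpow : HasDerivAt (fun v : ℝ => ((a : ℂ) - v * Complex.I) ^ (σ:ℂ))
        ((σ:ℂ) * ((a:ℂ) - u * Complex.I) ^ ((σ:ℂ) - 1) * (-Complex.I)) u := by
      exact hcomp.congr_deriv (by simp [mul_comm])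
    have hmul := hpow.mul (hg' u)
    refine hmul.congr_deriv ?_
    rw [Complex.cpow_sub _ _ (hz0 u), Complex.cpow_one]
    field_simp
    ring
  have hconst : Φ 0 = Complex.Gamma σ := by
    have hg0 : g 0 = (1 / (a:ℂ)) ^ (σ:ℂ) * Complex.Gamma σ := by
      rw [hgdef]
      simp only [Complex.ofReal_zero, zero_mul, sub_zero]
      exact Complex.integral_cpow_mul_exp_neg_mul_Ioi (by simpa using hσ) ha
    rw [hΦdef]
    simp only [Complex.ofReal_zero, zero_mul, sub_zero]
    rw [hg0, show (1/(a:ℂ)) = ((1/a : ℝ):ℂ) by push_cast; ring,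
      ← mul_assoc, ← Complex.mul_cpow_ofReal_nonneg ha.le (by positivity)]
    rw [show ((a:ℝ):ℂ) * ((1/a:ℝ):ℂ) = ((a * (1/a) : ℝ):ℂ) by push_cast; ring,
      mul_one_div_cancel ha.ne', Complex.ofReal_one, Complex.one_cpow, one_mul]
  have hval : Φ y = Complex.Gamma σ := by
    rw [← hconst]
    exact is_const_of_deriv_eq_zero (fun v => (hΦ' v).differentiableAt)
      (fun v => (hΦ' v).deriv) y 0
  -- conclude
  have hinv : ((a : ℂ) - y * Complex.I) ^ (-(σ:ℂ)) * ((a : ℂ) - y * Complex.I) ^ (σ:ℂ) = 1 := by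
    rw [← Complex.cpow_add _ _ (hz0 y)]
    simp
  show g y = _
  calc g y = (((a : ℂ) - y * Complex.I) ^ (-(σ:ℂ)) *
        ((a : ℂ) - y * Complex.I) ^ (σ:ℂ)) * g y := by rw [hinv, one_mul]
    _ = ((a : ℂ) - y * Complex.I) ^ (-(σ:ℂ)) * Φ y := by rw [hΦdef]; ring
    _ = Complex.Gamma σ * ((a : ℂ) - y * Complex.I) ^ (-(σ:ℂ)) := by rw [hval]; ring

lemma im_cpow (σ a y : ℝ) (ha : 0 < a) :
    (((a : ℂ) - y * Complex.I) ^ (-(σ : ℂ))).im =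
      (a ^ 2 + y ^ 2) ^ (-σ / 2) * Real.sin (σ * Real.arctan (y / a)) := by
  set z : ℂ := (a : ℂ) - y * Complex.I with hzdef
  have hre : z.re = a := by simp [hzdef]
  have him : z.im = -y := by simp [hzdef]
  have hz0 : z ≠ 0 := by
    intro h
    rw [h] at hre
    simp at hre; exact absurd hre.symm ha.ne'
  have harg : z.arg = -Real.arctan (y / a) := by
    have h1 : Real.tan z.arg = z.im / z.re := Complex.tan_arg z
    have h2 : -(π/2) < z.arg := Complex.neg_pi_div_two_lt_arg_iff.2 (Or.inl (by rw [hre]; exact ha))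
    have h3 : z.arg < π/2 := Complex.arg_lt_pi_div_two_iff.2 (Or.inl (by rw [hre]; exact ha))
    have := Real.arctan_tan h2 h3
    rw [h1, hre, him, neg_div, Real.arctan_neg] at this
    linarith
  have habs : ‖z‖ = Real.sqrt (a ^ 2 + y ^ 2) := by
    rw [Complex.norm_def, Complex.normSq_apply, hre, him]
    ring_nf
  have habs_pos : 0 < ‖z‖ := norm_pos_iff.mpr hz0
  rw [Complex.cpow_def_of_ne_zero hz0]
  rw [Complex.exp_im]
  have hre2 : (Complex.log z * -(σ:ℂ)).re = Real.log ‖z‖ * -σ := by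
    simp [Complex.mul_re, Complex.log_re, Complex.log_im]
  have him2 : (Complex.log z * -(σ:ℂ)).im = z.arg * -σ := by
    simp [Complex.mul_im, Complex.log_im, Complex.log_re]
  rw [hre2, him2, harg]
  have h4 : Real.exp (Real.log ‖z‖ * -σ) = (a ^ 2 + y ^ 2) ^ (-σ / 2) := by
    rw [← Real.rpow_def_of_pos habs_pos, habs, Real.sqrt_eq_rpow,
      ← Real.rpow_mul (by positivity : (0:ℝ) ≤ a ^ 2 + y ^ 2)]
    norm_num
    rw [show -(1/2*σ) = -σ/2 by ring]
  rw [h4]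
  congr 1
  rw [show -Real.arctan (y/a) * -σ = σ * Real.arctan (y/a) by ring]

lemma real_im (σ a y : ℝ) (hσ : 0 < σ) (ha : 0 < a) :
    ∫ x in Ioi (0:ℝ), x ^ (σ - 1) * (Real.exp (-(a * x)) * Real.sin (x * y)) =
      (∫ t in Ioi (0:ℝ), (t:ℂ)^((σ:ℂ)-1) *
        Complex.exp (-(((a:ℂ) - y*Complex.I)*t))).im := by
  have hint := integrable_cpow_exp ((σ:ℂ)-1) (by simpa using hσ)
    (z := (a:ℂ) - y*Complex.I) (by simpa using ha)
  rw [← RCLike.im_to_complex, ← integral_im hint]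
  apply setIntegral_congr_fun measurableSet_Ioi
  intro x hx
  have h1 : (x:ℂ)^((σ:ℂ)-1) = ((x ^ (σ-1) : ℝ) : ℂ) := by
    rw [Complex.ofReal_cpow hx.out.le]; norm_cast
  simp only [RCLike.im_to_complex]
  rw [h1]
  simp [Complex.exp_im, Complex.mul_re, Complex.mul_im]
  ring_nf
  exact Or.inl trivial

lemma real_re (σ a y : ℝ) (hσ : 0 < σ) (ha : 0 < a) :
    ∫ x in Ioi (0:ℝ), x ^ (σ - 1) * (Real.exp (-(a * x)) * Real.cos (x * y)) =
      (∫ t in Ioi (0:ℝ), (t:ℂ)^((σ:ℂ)-1) *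
        Complex.exp (-(((a:ℂ) - y*Complex.I)*t))).re := by
  have hint := integrable_cpow_exp ((σ:ℂ)-1) (by simpa using hσ)
    (z := (a:ℂ) - y*Complex.I) (by simpa using ha)
  rw [← RCLike.re_to_complex, ← integral_re hint]
  apply setIntegral_congr_fun measurableSet_Ioi
  intro x hx
  have h1 : (x:ℂ)^((σ:ℂ)-1) = ((x ^ (σ-1) : ℝ) : ℂ) := by
    rw [Complex.ofReal_cpow hx.out.le]; norm_cast
  simp only [RCLike.re_to_complex]
  rw [h1]
  simp [Complex.exp_re, Complex.mul_re, Complex.mul_im]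
  ring_nf
  exact Or.inl trivial

theorem stmt4 (a y η : ℝ) (ha : 0 < a) (hy : 0 < y) (hη : -1 < η) (hη0 : η ≠ 0) :
    (∫ x in Ioi (0 : ℝ), x ^ (η - 1) * Real.exp (-(a * x)) * Real.sin (x * y)) =
      Real.Gamma η * (a ^ 2 + y ^ 2) ^ (-η / 2) * Real.sin (η * Real.arctan (y / a)) := by
  have hassoc : (∫ x in Ioi (0 : ℝ), x ^ (η - 1) * Real.exp (-(a * x)) * Real.sin (x * y)) =
      ∫ x in Ioi (0 : ℝ), x ^ (η - 1) * (Real.exp (-(a * x)) * Real.sin (x * y)) := by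
    apply setIntegral_congr_fun measurableSet_Ioi
    intro x _
    ring
  rcases lt_or_gt_of_ne hη0 with hneg | hpos
  · -- -1 < η < 0 : integration by parts
    set z : ℂ := (a:ℂ) - y * Complex.I with hz
    have hz0 : z ≠ 0 := by
      intro h
      have h2 : z.re = a := by simp [hz]
      rw [h] at h2
      simp at h2
      exact ha.ne h2
    set f : ℝ → ℝ := fun x => x ^ η / η * (Real.exp (-(a * x)) * Real.sin (x * y)) with hf
    set f' : ℝ → ℝ := fun x => x ^ (η - 1) * (Real.exp (-(a * x)) * Real.sin (x * y)) +
        x ^ η / η * ((Real.exp (-(a * x)) * -a) * Real.sin (x * y) +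
          Real.exp (-(a * x)) * (Real.cos (x * y) * y)) with hf'
    have hderiv : ∀ x ∈ Ioi (0:ℝ), HasDerivAt f (f' x) x := by
      intro x hx
      have h1 : HasDerivAt (fun x : ℝ => x ^ η / η) (x ^ (η - 1)) x := by
        have := (Real.hasDerivAt_rpow_const (p := η) (Or.inl (ne_of_gt hx))).div_const η
        exact this.congr_deriv (by field_simp)
      have hlin : HasDerivAt (fun x : ℝ => -(a * x)) (-a) x := by
        exact ((hasDerivAt_id x).const_mul a).neg.congr_deriv (by ring)
      have h2 := hlin.exp
      have hlin2 : HasDerivAt (fun x : ℝ => x * y) y x := by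
        simpa using (hasDerivAt_id x).mul_const y
      have h3 := hlin2.sin
      exact h1.mul (h2.mul h3)
    have hbound : IntegrableOn (fun x : ℝ => x ^ η * Real.exp (-(a * x))) (Ioi 0) := by
      have := integrableOn_rpow_mul_exp_neg_mul_rpow hη one_pos ha
      simpa [Real.rpow_one, neg_mul] using this
    have hxpow : ∀ x : ℝ, 0 < x → x ^ (η-1) * x = x ^ η := by
      intro x hx
      rw [← Real.rpow_add_one (ne_of_gt hx) (η-1)]
      norm_num
    have hmeas1 : AEStronglyMeasurable
        (fun x : ℝ => x ^ (η-1) * (Real.exp (-(a * x)) * Real.sin (x * y)))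
        (volume.restrict (Ioi 0)) := by
      apply ContinuousOn.aestronglyMeasurable ?_ measurableSet_Ioi
      intro x hx
      apply ContinuousAt.continuousWithinAt
      exact (Real.continuousAt_rpow_const x (η-1) (Or.inl (ne_of_gt hx))).mul (by fun_prop)
    have hsin_le : ∀ x : ℝ, 0 < x → |Real.sin (x*y)| ≤ x * y := by
      intro x hx
      refine Real.abs_sin_le_abs.trans ?_
      rw [abs_of_nonneg (by positivity)]
    have hint1 : IntegrableOn
        (fun x : ℝ => x ^ (η-1) * (Real.exp (-(a * x)) * Real.sin (x * y))) (Ioi 0) := by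
      apply (hbound.const_mul y).mono' hmeas1
      filter_upwards [ae_restrict_mem measurableSet_Ioi] with x hx
      rw [Real.norm_eq_abs, abs_mul, abs_mul,
        abs_of_nonneg (Real.rpow_nonneg hx.out.le _), abs_of_nonneg (Real.exp_pos _).le]
      calc x ^ (η-1) * (Real.exp (-(a*x)) * |Real.sin (x*y)|)
          ≤ x ^ (η-1) * (Real.exp (-(a*x)) * (x * y)) := by
            apply mul_le_mul_of_nonneg_left ?_ (Real.rpow_nonneg hx.out.le _)
            exact mul_le_mul_of_nonneg_left (hsin_le x hx.out) (Real.exp_pos _).le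
        _ = y * (x ^ η * Real.exp (-(a*x))) := by rw [← hxpow x hx.out]; ring
    have hmeas2 : AEStronglyMeasurable
        (fun x : ℝ => x ^ η / η * ((Real.exp (-(a * x)) * -a) * Real.sin (x * y) +
          Real.exp (-(a * x)) * (Real.cos (x * y) * y))) (volume.restrict (Ioi 0)) := by
      apply ContinuousOn.aestronglyMeasurable ?_ measurableSet_Ioi
      intro x hx
      apply ContinuousAt.continuousWithinAt
      exact ((Real.continuousAt_rpow_const x η (Or.inl (ne_of_gt hx))).div_const η).mul
        (by fun_prop)
    have hint2 : IntegrableOn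
        (fun x : ℝ => x ^ η / η * ((Real.exp (-(a * x)) * -a) * Real.sin (x * y) +
          Real.exp (-(a * x)) * (Real.cos (x * y) * y))) (Ioi 0) := by
      apply (hbound.const_mul ((a + y)/|η|)).mono' hmeas2
      filter_upwards [ae_restrict_mem measurableSet_Ioi] with x hx
      rw [Real.norm_eq_abs, abs_mul, abs_div,
        abs_of_nonneg (Real.rpow_nonneg hx.out.le _)]
      have hb : |(Real.exp (-(a * x)) * -a) * Real.sin (x * y) +
          Real.exp (-(a * x)) * (Real.cos (x * y) * y)| ≤ Real.exp (-(a*x)) * (a + y) := by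
        refine (abs_add_le _ _).trans ?_
        rw [abs_mul, abs_mul, abs_mul, abs_mul, abs_neg,
          abs_of_nonneg (Real.exp_pos (-(a*x))).le, abs_of_nonneg ha.le,
          abs_of_nonneg hy.le]
        have s1 : |Real.sin (x*y)| ≤ 1 := Real.abs_sin_le_one _
        have c1 : |Real.cos (x*y)| ≤ 1 := Real.abs_cos_le_one _
        have e1 := (Real.exp_pos (-(a*x))).le
        have t1 : Real.exp (-(a*x)) * a * |Real.sin (x*y)| ≤ Real.exp (-(a*x)) * a * 1 :=
          mul_le_mul_of_nonneg_left s1 (by positivity)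
        have t2 : Real.exp (-(a*x)) * (|Real.cos (x*y)| * y) ≤
            Real.exp (-(a*x)) * (1 * y) := by
          apply mul_le_mul_of_nonneg_left ?_ e1
          exact mul_le_mul_of_nonneg_right c1 hy.le
        nlinarith
      calc x ^ η / |η| * |(Real.exp (-(a * x)) * -a) * Real.sin (x * y) +
            Real.exp (-(a * x)) * (Real.cos (x * y) * y)|
          ≤ x ^ η / |η| * (Real.exp (-(a*x)) * (a + y)) := by
            apply mul_le_mul_of_nonneg_left hb
            exact div_nonneg (Real.rpow_nonneg hx.out.le _) (abs_nonneg _)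
        _ = (a + y)/|η| * (x ^ η * Real.exp (-(a*x))) := by ring
    -- continuity at 0
    have hf0 : f 0 = 0 := by rw [hf]; simp
    have habsη : 0 < |η| := abs_pos.mpr hη0
    have hcont : ContinuousWithinAt f (Ici 0) 0 := by
      rw [ContinuousWithinAt, hf0]
      apply squeeze_zero_norm' (a := fun x => y/|η| * x ^ (η+1))
      · filter_upwards [self_mem_nhdsWithin] with x hx
        rcases eq_or_lt_of_le (mem_Ici.mp hx) with h0 | h0
        · rw [← h0, hf0]
          simp [Real.zero_rpow (by linarith : η + 1 ≠ 0)]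
        · rw [Real.norm_eq_abs, hf, abs_mul, abs_div, abs_mul,
            abs_of_nonneg (Real.rpow_nonneg (le_of_lt h0) _),
            abs_of_nonneg (Real.exp_pos _).le]
          have hexp1 : Real.exp (-(a*x)) ≤ 1 := by
            rw [Real.exp_le_one_iff]
            nlinarith
          have hpow1 : x ^ η * x = x ^ (η+1) := by
            rw [← Real.rpow_add_one (ne_of_gt h0) η]
          calc x ^ η / |η| * (Real.exp (-(a*x)) * |Real.sin (x*y)|)
              ≤ x ^ η / |η| * (1 * (x*y)) := by
                apply mul_le_mul_of_nonneg_left ?_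
                  (div_nonneg (Real.rpow_nonneg (le_of_lt h0) _) (abs_nonneg _))
                exact mul_le_mul hexp1 (hsin_le x h0) (abs_nonneg _) zero_le_one
            _ = y/|η| * (x ^ η * x) := by ring
            _ = y/|η| * x ^ (η+1) := by rw [hpow1]
      · have h := ((Real.continuousAt_rpow_const 0 (η+1)
            (Or.inr (by linarith))).continuousWithinAt (s := Ici 0)).tendsto
        rw [Real.zero_rpow (by linarith : η + 1 ≠ 0)] at h
        simpa using h.const_mul (y/|η|)
    -- tendsto at top
    have htop : Tendsto f atTop (nhds 0) := by
      apply squeeze_zero_norm' (a := fun x => 1/|η| * (x ^ η * Real.exp (-a*x)))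
      · filter_upwards [eventually_gt_atTop (0:ℝ)] with x hx
        rw [Real.norm_eq_abs, hf, abs_mul, abs_div, abs_mul,
          abs_of_nonneg (Real.rpow_nonneg hx.le _), abs_of_nonneg (Real.exp_pos _).le]
        have s1 : |Real.sin (x*y)| ≤ 1 := Real.abs_sin_le_one _
        calc x ^ η / |η| * (Real.exp (-(a*x)) * |Real.sin (x*y)|)
            ≤ x ^ η / |η| * (Real.exp (-(a*x)) * 1) := by
              apply mul_le_mul_of_nonneg_left ?_
                (div_nonneg (Real.rpow_nonneg hx.le _) (abs_nonneg _))
              exact mul_le_mul_of_nonneg_left s1 (Real.exp_pos _).le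
          _ = 1/|η| * (x ^ η * Real.exp (-a*x)) := by rw [neg_mul]; ring
      · simpa using (tendsto_rpow_mul_exp_neg_mul_atTop_nhds_zero η a ha).const_mul (1/|η|)
    -- FTC
    have hFTC := MeasureTheory.integral_Ioi_of_hasDerivAt_of_tendsto hcont hderiv
      (hint1.add hint2) htop
    rw [hf0, sub_zero] at hFTC
    rw [hf'] at hFTC
    rw [MeasureTheory.integral_add hint1 hint2] at hFTC
    -- identify the second integral
    have hintS : IntegrableOn
        (fun x : ℝ => x ^ η * (Real.exp (-(a * x)) * Real.sin (x * y))) (Ioi 0) := by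
      apply hbound.mono' ?_ ?_
      · apply ContinuousOn.aestronglyMeasurable ?_ measurableSet_Ioi
        intro x hx
        apply ContinuousAt.continuousWithinAt
        exact (Real.continuousAt_rpow_const x η (Or.inl (ne_of_gt hx))).mul (by fun_prop)
      · filter_upwards [ae_restrict_mem measurableSet_Ioi] with x hx
        rw [Real.norm_eq_abs, abs_mul, abs_mul,
          abs_of_nonneg (Real.rpow_nonneg hx.out.le _), abs_of_nonneg (Real.exp_pos _).le]
        have s1 : |Real.sin (x*y)| ≤ 1 := Real.abs_sin_le_one _
        have := mul_le_mul_of_nonneg_left s1 (Real.exp_pos (-(a*x))).le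
        calc x ^ η * (Real.exp (-(a*x)) * |Real.sin (x*y)|)
            ≤ x ^ η * (Real.exp (-(a*x)) * 1) :=
              mul_le_mul_of_nonneg_left this (Real.rpow_nonneg hx.out.le _)
          _ = x ^ η * Real.exp (-(a*x)) := by ring
    have hintC : IntegrableOn
        (fun x : ℝ => x ^ η * (Real.exp (-(a * x)) * Real.cos (x * y))) (Ioi 0) := by
      apply hbound.mono' ?_ ?_
      · apply ContinuousOn.aestronglyMeasurable ?_ measurableSet_Ioi
        intro x hx
        apply ContinuousAt.continuousWithinAt
        exact (Real.continuousAt_rpow_const x η (Or.inl (ne_of_gt hx))).mul (by fun_prop)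
      · filter_upwards [ae_restrict_mem measurableSet_Ioi] with x hx
        rw [Real.norm_eq_abs, abs_mul, abs_mul,
          abs_of_nonneg (Real.rpow_nonneg hx.out.le _), abs_of_nonneg (Real.exp_pos _).le]
        have c1 : |Real.cos (x*y)| ≤ 1 := Real.abs_cos_le_one _
        have := mul_le_mul_of_nonneg_left c1 (Real.exp_pos (-(a*x))).le
        calc x ^ η * (Real.exp (-(a*x)) * |Real.cos (x*y)|)
            ≤ x ^ η * (Real.exp (-(a*x)) * 1) :=
              mul_le_mul_of_nonneg_left this (Real.rpow_nonneg hx.out.le _)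
          _ = x ^ η * Real.exp (-(a*x)) := by ring
    have hsplit : (∫ x in Ioi (0:ℝ), x ^ η / η * ((Real.exp (-(a * x)) * -a) * Real.sin (x * y) +
          Real.exp (-(a * x)) * (Real.cos (x * y) * y))) =
        (1/η) * (-a * (∫ x in Ioi (0:ℝ), x ^ η * (Real.exp (-(a * x)) * Real.sin (x * y)))
          + y * (∫ x in Ioi (0:ℝ), x ^ η * (Real.exp (-(a * x)) * Real.cos (x * y)))) := by
      rw [show (∫ x in Ioi (0:ℝ), x ^ η / η * ((Real.exp (-(a * x)) * -a) * Real.sin (x * y) +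
            Real.exp (-(a * x)) * (Real.cos (x * y) * y))) =
          ∫ x in Ioi (0:ℝ), (1/η) * (-a * (x ^ η * (Real.exp (-(a * x)) * Real.sin (x * y)))
            + y * (x ^ η * (Real.exp (-(a * x)) * Real.cos (x * y)))) from
        setIntegral_congr_fun measurableSet_Ioi (fun x _ => by ring)]
      rw [MeasureTheory.integral_const_mul]
      congr 1
      rw [MeasureTheory.integral_add ((hintS.const_mul (-a))) ((hintC.const_mul y)),
        MeasureTheory.integral_const_mul, MeasureTheory.integral_const_mul]
    rw [hsplit] at hFTC
    -- now bring in the complex evaluation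
    have hσpos : (0:ℝ) < η + 1 := by linarith
    have hIs := real_im (η+1) a y hσpos ha
    have hIc := real_re (η+1) a y hσpos ha
    rw [show (η + 1 - 1 : ℝ) = η by ring] at hIs hIc
    have hkey := key_s4 (η+1) hσpos a ha y
    set G : ℂ := ∫ t in Ioi (0:ℝ), (t:ℂ)^(((η+1:ℝ):ℂ)-1) *
        Complex.exp (-(((a:ℂ) - y*Complex.I)*t)) with hG
    have hzG : z * G = Complex.Gamma ((η+1:ℝ)) * z ^ (-(η:ℂ)) := by
      rw [hkey, show (-(((η+1):ℝ):ℂ)) = -(η:ℂ) + (-1) by push_cast; ring,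
        Complex.cpow_add _ _ hz0, Complex.cpow_neg_one]
      field_simp
    have hzGim : a * G.im - y * G.re = Real.Gamma (η+1) *
        ((a ^ 2 + y ^ 2) ^ (-η / 2) * Real.sin (η * Real.arctan (y / a))) := by
      have h1 : (z * G).im = a * G.im + (-y) * G.re := by
        rw [Complex.mul_im]
        congr 1
        · congr 1; simp [hz]
        · congr 1; simp [hz]
      have h2 : (z * G).im = Real.Gamma (η+1) * (z ^ (-(η:ℂ))).im := by
        rw [hzG, Complex.Gamma_ofReal, Complex.mul_im]
        simp
      rw [h2, im_cpow η a y ha] at h1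
      linarith [h1]
    -- final computation
    rw [hassoc]
    have hGamma : Real.Gamma (η + 1) = η * Real.Gamma η := Real.Gamma_add_one hη0
    have hfinal : (∫ x in Ioi (0:ℝ), x ^ (η-1) * (Real.exp (-(a * x)) * Real.sin (x * y))) =
        -((1/η) * (-a * G.im + y * G.re)) := by
      rw [hIs, hIc] at hFTC
      linarith [hFTC]
    rw [hfinal]
    rw [show -((1/η) * (-a * G.im + y * G.re)) = (1/η) * (a * G.im - y * G.re) by ring, hzGim,
      hGamma]
    field_simp
  · -- 0 < η
    rw [hassoc, real_im η a y hpos ha, key_s4 η hpos a ha y, Complex.Gamma_ofReal,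
      Complex.mul_im]
    simp [im_cpow η a y ha]
    ring

end Stmt4Aux
end

section
/- For every real n > 0, ∫₀^∞ x sin(πnx)/(e^{2πx}-1) dx = (i/(8π²)) · [ψ'(1 + in/2) - ψ'(1 - in/2)], where ψ' is the derivative of the digamma function (the trigamma function). -/
open Complex Real Set

/-- The trigamma function `ψ'(z) = Σ_{k≥0} (z+k)^{-2}` for `Re z > 0`. -/
noncomputable def trigamma (z : ℂ) : ℂ := ∑' k : ℕ, (z + k) ^ (-2 : ℤ)

open MeasureTheory Filter


lemma aux_tendsto_mul_exp {b : ℝ} (hb : 0 < b) :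
    Tendsto (fun x : ℝ => x * Real.exp (-b * x)) atTop (nhds 0) := by
  have h := Real.tendsto_pow_mul_exp_neg_atTop_nhds_zero 1
  have := (h.comp (tendsto_id.const_mul_atTop hb)).div_const b
  simp only [Function.comp, pow_one, zero_div] at this
  refine this.congr fun x => ?_
  field_simp
  simp only [id_eq]

lemma aux_int_real {b : ℝ} (hb : 0 < b) :
    IntegrableOn (fun x : ℝ => x * Real.exp (-b * x)) (Ioi 0) := by
  apply integrable_of_isBigO_exp_neg (half_pos hb) (by fun_prop)
  rw [Asymptotics.isBigO_iff]
  refine ⟨1, ?_⟩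
  filter_upwards [(aux_tendsto_mul_exp (half_pos hb)).eventually
    (eventually_le_nhds (by norm_num : (0:ℝ) < 1)), eventually_ge_atTop 0] with x h1 h2
  have : Real.exp (-b * x) = Real.exp (-(b/2) * x) * Real.exp (-(b/2) * x) := by
    rw [← Real.exp_add]; ring_nf
  rw [Real.norm_eq_abs, Real.norm_eq_abs, Real.abs_exp,
    _root_.abs_of_nonneg (mul_nonneg h2 (Real.exp_pos _).le), this, ← mul_assoc, one_mul]
  exact mul_le_of_le_one_left (Real.exp_pos _).le h1

-- complex integrand integrable
lemma aux_int_cx {w : ℂ} (hw : 0 < w.re) :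
    IntegrableOn (fun x : ℝ => (x : ℂ) * Complex.exp (-w * x)) (Ioi 0) := by
  refine Integrable.mono' (aux_int_real hw) ((Complex.continuous_ofReal.mul (Complex.continuous_exp.comp (by continuity))).aestronglyMeasurable) ?_
  filter_upwards [ae_restrict_mem measurableSet_Ioi] with x hx
  have h1 : (-w * (x:ℂ)).re = -w.re * x := by simp [Complex.mul_re]
  simp only [norm_mul, Complex.norm_real, Complex.norm_exp, h1,
    Real.norm_eq_abs]
  rw [_root_.abs_of_pos (mem_Ioi.mp hx)]

-- the key integral: ∫₀^∞ x e^{-wx} dx = w⁻²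
lemma aux_integral {w : ℂ} (hw : 0 < w.re) :
    ∫ x in Ioi (0:ℝ), (x : ℂ) * Complex.exp (-w * x) = (w ^ 2)⁻¹ := by
  have hw0 : w ≠ 0 := fun h => by simp [h] at hw
  have key := integral_Ioi_of_hasDerivAt_of_tendsto' (a := (0:ℝ)) (m := 0)
    (f := fun x : ℝ => -((x : ℂ)/w + (w^2)⁻¹) * Complex.exp (-w * x))
    (f' := fun x : ℝ => (x : ℂ) * Complex.exp (-w * x)) ?_ (aux_int_cx hw) ?_
  · rw [key]; simp
  · intro x _
    have h1 : HasDerivAt (fun x : ℝ => -((x : ℂ)/w + (w^2)⁻¹)) (-(1/w)) x := by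
      have := ((Complex.ofRealCLM.hasDerivAt (x := x)).div_const w).add_const ((w^2)⁻¹)
      simpa [Pi.neg_def] using this.neg
    have h2 : HasDerivAt (fun x : ℝ => Complex.exp (-w * x)) (-w * Complex.exp (-w * x)) x := by
      have hc : HasDerivAt (fun x : ℝ => -w * (x:ℂ)) (-w) x := by
        simpa using (Complex.ofRealCLM.hasDerivAt (x := x)).const_mul (-w)
      simpa [mul_comm] using hc.cexp
    have := h1.mul h2
    refine this.congr_deriv ?_
    have hww : w * w⁻¹ = 1 := mul_inv_cancel₀ hw0
    linear_combination ((x:ℂ) * Complex.exp (-w * x) + Complex.exp (-w * x) * w⁻¹) * hww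
  · have : Tendsto (fun x : ℝ => ‖-((x : ℂ)/w + (w^2)⁻¹) * Complex.exp (-w * x)‖) atTop (nhds 0) := by
      have hb : Tendsto (fun x : ℝ => (x * ‖w‖⁻¹ + ‖(w^2)⁻¹‖) * Real.exp (-w.re * x)) atTop (nhds 0) := by
        have t1 := (aux_tendsto_mul_exp hw).mul_const (‖w‖⁻¹)
        have t2 := (Real.tendsto_exp_neg_atTop_nhds_zero.comp (tendsto_id.const_mul_atTop hw)).const_mul ‖(w^2)⁻¹‖
        simp only [Function.comp, zero_mul, mul_zero] at t1 t2
        have := t1.add t2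
        simp only [add_zero] at this
        refine this.congr fun x => ?_
        simp only [id_eq, neg_mul]
        ring
      apply squeeze_zero' (Eventually.of_forall fun x => norm_nonneg _) _ hb
      filter_upwards [eventually_ge_atTop (0:ℝ)] with x hx0
      rw [norm_mul]
      have hre : ‖cexp (-w * (x:ℂ))‖ = Real.exp (-w.re * x) := by
        rw [Complex.norm_exp]; congr 1; simp [Complex.mul_re]
      rw [hre]
      apply mul_le_mul_of_nonneg_right _ (Real.exp_pos _).le
      calc ‖-((x : ℂ)/w + (w^2)⁻¹)‖ ≤ ‖(x:ℂ)/w‖ + ‖(w^2)⁻¹‖ := by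
            rw [norm_neg]; exact norm_add_le _ _
        _ ≤ x * ‖w‖⁻¹ + ‖(w^2)⁻¹‖ := by
            rw [norm_div, div_eq_mul_inv, Complex.norm_real]
            gcongr
            rw [Real.norm_eq_abs, _root_.abs_of_nonneg hx0]
    rw [tendsto_zero_iff_norm_tendsto_zero]
    exact this

-- real version of key integral
lemma aux_integral_real {b : ℝ} (hb : 0 < b) :
    ∫ x in Ioi (0:ℝ), x * Real.exp (-b * x) = (b ^ 2)⁻¹ := by
  have h := aux_integral (w := (b:ℂ)) (by simpa using hb)
  have h2 : ((∫ x in Ioi (0:ℝ), x * Real.exp (-b * x) : ℝ) : ℂ)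
      = ∫ x in Ioi (0:ℝ), (x : ℂ) * Complex.exp (-(b:ℂ) * x) :=
    by
    rw [show (fun x : ℝ => (x:ℂ) * Complex.exp (-(b:ℂ)*x))
        = fun x : ℝ => ((x * Real.exp (-b*x) : ℝ) : ℂ) from
      funext fun x => by push_cast; norm_num [Complex.ofReal_exp]]
    exact integral_ofReal.symm
  rw [← h2] at h
  have h3 : ((b:ℂ)^2)⁻¹ = (((b^2)⁻¹ : ℝ) : ℂ) := by push_cast; ring
  rw [h3] at h
  exact_mod_cast h
-- geometric expansion
lemma aux_geo {x : ℝ} (hx : 0 < x) (a : ℝ) :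
    HasSum (fun k : ℕ => a * Real.exp (-(2*π*((k:ℝ)+1)) * x))
      (a / (Real.exp (2*π*x) - 1)) := by
  have hπ := Real.pi_pos
  set r := Real.exp (-(2*π*x)) with hr
  have hr0 : 0 ≤ r := (Real.exp_pos _).le
  have hr1 : r < 1 := Real.exp_lt_one_iff.mpr (by nlinarith)
  have h := (hasSum_geometric_of_lt_one hr0 hr1).mul_left (a * r)
  have hre : r * Real.exp (2*π*x) = 1 := by rw [hr, ← Real.exp_add]; simp
  have he : Real.exp (2*π*x) - 1 ≠ 0 := by
    have : (1:ℝ) < Real.exp (2*π*x) := by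
      rw [← Real.exp_zero]
      exact Real.exp_lt_exp.mpr (by positivity)
    linarith
  have h1 : (1:ℝ) - r ≠ 0 := by nlinarith
  have hval : a * r * (1 - r)⁻¹ = a / (Real.exp (2*π*x) - 1) := by
    field_simp
    linear_combination a * hre
  have hterm : (fun k : ℕ => a * Real.exp (-(2*π*((k:ℝ)+1)) * x)) = fun k => a * r * r ^ k := by
    funext k
    rw [hr, ← Real.exp_nat_mul, mul_assoc a, ← Real.exp_add]
    congr 2
    ring
  rw [hterm, ← hval]
  exact h

lemma aux_summable {z : ℂ} (hz : 1 ≤ z.re) : Summable (fun k : ℕ => ((z + k)^2)⁻¹) := by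
  apply Summable.of_norm
  have base : Summable (fun k : ℕ => (((k:ℝ)+1)^2)⁻¹) := by
    have h0 : Summable (fun n : ℕ => 1/(n:ℝ)^2) := summable_one_div_nat_pow.mpr one_lt_two
    have := (summable_nat_add_iff 1).mpr h0
    simpa [one_div] using this
  refine base.of_nonneg_of_le (fun k => norm_nonneg _) fun k => ?_
  rw [norm_inv, norm_pow]
  have h1 : ((k:ℝ)+1) ≤ ‖z + k‖ := by
    have h2 : ((k:ℝ)+1) ≤ (z+k).re := by
      simp only [Complex.add_re, Complex.natCast_re]
      linarith
    exact h2.trans (Complex.re_le_norm _)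
  exact inv_anti₀ (by positivity) (by
    have : (0:ℝ) ≤ (k:ℝ)+1 := by positivity
    exact pow_le_pow_left₀ this h1 2)

lemma aux_term (n : ℝ) (k : ℕ) :
    ∫ x in Ioi (0:ℝ), ((x * Real.sin (π*n*x) * Real.exp (-(2*π*((k:ℝ)+1)) * x) : ℝ) : ℂ)
      = Complex.I / (8*(π:ℂ)^2) * (((1 + Complex.I * (n:ℂ) / 2 + k)^2)⁻¹
          - ((1 - Complex.I * (n:ℂ) / 2 + k)^2)⁻¹) := by
  have hπ := Real.pi_pos
  have hc0 : (0:ℝ) < 2*π*((k:ℝ)+1) := by positivity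
  set c : ℝ := 2*π*((k:ℝ)+1) with hc
  set wp : ℂ := c + π*n*Complex.I with hwp
  set wm : ℂ := c - π*n*Complex.I with hwm
  have hwp_re : 0 < wp.re := by
    rw [hwp]; simpa using hc0
  have hwm_re : 0 < wm.re := by
    rw [hwm]; simpa using hc0
  have hpt : ∀ x ∈ Ioi (0:ℝ), ((x * Real.sin (π*n*x) * Real.exp (-c*x) : ℝ) : ℂ)
      = ((x:ℂ) * Complex.exp (-wp*x) - (x:ℂ) * Complex.exp (-wm*x)) * (Complex.I/2) := by
    intro x _
    push_cast [Complex.ofReal_exp, Complex.ofReal_sin]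
    rw [Complex.sin]
    rw [show -wp*(x:ℂ) = -(↑π*(↑n*↑x))*Complex.I + -↑c*↑x by rw [hwp]; push_cast; ring,
        show -wm*(x:ℂ) = ↑π*(↑n*↑x)*Complex.I + -↑c*↑x by rw [hwm]; push_cast; ring,
        Complex.exp_add, Complex.exp_add]
    ring
  rw [setIntegral_congr_fun measurableSet_Ioi hpt, integral_mul_const,
    integral_sub (aux_int_cx hwp_re) (aux_int_cx hwm_re), aux_integral hwp_re,
    aux_integral hwm_re]
  have hwp2 : wp = 2*(π:ℂ) * (1 + Complex.I * (n:ℂ) / 2 + k) := by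
    rw [hwp, hc]; push_cast; ring
  have hwm2 : wm = 2*(π:ℂ) * (1 - Complex.I * (n:ℂ) / 2 + k) := by
    rw [hwm, hc]; push_cast; ring
  have hπc : ((π:ℂ)) ≠ 0 := Complex.ofReal_ne_zero.mpr hπ.ne'
  rw [hwp2, hwm2]; simp only [mul_pow, mul_inv]
  have h8 : Complex.I / (8*(π:ℂ)^2) = ((2*(π:ℂ))^2)⁻¹ * (Complex.I / 2) := by
    field_simp
    ring
  rw [h8]
  ring

lemma trigamma_eq (z : ℂ) : trigamma z = ∑' k : ℕ, ((z + k)^2)⁻¹ :=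
  tsum_congr fun k => by rw [zpow_neg]; norm_cast

theorem stmt8 (n : ℝ) (hn : 0 < n) :
    ((∫ x in Ioi (0 : ℝ), x * Real.sin (π * n * x) / (Real.exp (2 * π * x) - 1) : ℝ) : ℂ) =
      Complex.I / (8 * (π : ℂ) ^ 2) *
        (trigamma (1 + Complex.I * n / 2) - trigamma (1 - Complex.I * n / 2)) := by
  have hπ := Real.pi_pos
  set F : ℕ → ℝ → ℂ :=
    fun k x => ((x * Real.sin (π*n*x) * Real.exp (-(2*π*((k:ℝ)+1)) * x) : ℝ) : ℂ) with hFdef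
  have hb : ∀ k : ℕ, (0:ℝ) < 2*π*((k:ℝ)+1) := fun k => by positivity
  have hFle : ∀ k : ℕ, ∀ x ∈ Ioi (0:ℝ), ‖F k x‖ ≤ x * Real.exp (-(2*π*((k:ℝ)+1)) * x) := by
    intro k x hx
    rw [hFdef]
    simp only [Complex.norm_real, Real.norm_eq_abs]
    rw [abs_mul, abs_mul, Real.abs_exp, _root_.abs_of_pos (mem_Ioi.mp hx)]
    have h1 : |Real.sin (π*n*x)| ≤ 1 := Real.abs_sin_le_one _
    calc x * |Real.sin (π*n*x)| * Real.exp (-(2*π*((k:ℝ)+1))*x)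
        ≤ x * 1 * Real.exp (-(2*π*((k:ℝ)+1))*x) := by
          gcongr
          exact (mem_Ioi.mp hx).le
      _ = x * Real.exp (-(2*π*((k:ℝ)+1))*x) := by ring
  have hFint : ∀ k : ℕ, Integrable (F k) (volume.restrict (Ioi (0:ℝ))) := by
    intro k
    refine Integrable.mono' (aux_int_real (hb k)) ?_ ?_
    · exact (Complex.continuous_ofReal.comp (by continuity)).aestronglyMeasurable
    · filter_upwards [ae_restrict_mem measurableSet_Ioi] with x hx using hFle k x hx
  have hFsum : Summable fun k : ℕ => ∫ x in Ioi (0:ℝ), ‖F k x‖ := by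
    have base : Summable (fun k : ℕ => (((k:ℝ)+1)^2)⁻¹) := by
      have h0 : Summable (fun m : ℕ => 1/(m:ℝ)^2) := summable_one_div_nat_pow.mpr one_lt_two
      have := (summable_nat_add_iff 1).mpr h0
      simpa [one_div] using this
    have base2 : Summable (fun k : ℕ => ((2*π*((k:ℝ)+1))^2)⁻¹) := by
      have := (base.mul_left (((2*π)^2)⁻¹))
      refine this.congr fun k => ?_
      rw [← mul_inv, ← mul_pow]
    refine Summable.of_nonneg_of_le
      (fun k => integral_nonneg fun x => norm_nonneg _) (fun k => ?_) base2
    rw [← aux_integral_real (hb k)]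
    refine setIntegral_mono_on ((hFint k).norm) (aux_int_real (hb k))
      measurableSet_Ioi (fun x hx => hFle k x hx)
  have hhs := MeasureTheory.hasSum_integral_of_summable_integral_norm hFint hFsum
  have hsum_eq : (∫ x in Ioi (0:ℝ), ∑' k, F k x)
      = ((∫ x in Ioi (0:ℝ), x * Real.sin (π * n * x) / (Real.exp (2 * π * x) - 1) : ℝ) : ℂ) := by
    have step : ∀ x ∈ Ioi (0:ℝ), (∑' k, F k x)
        = ((x * Real.sin (π * n * x) / (Real.exp (2 * π * x) - 1) : ℝ) : ℂ) := by
      intro x hx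
      rw [hFdef]
      rw [← Complex.ofReal_tsum]
      congr 1
      exact (aux_geo (mem_Ioi.mp hx) (x * Real.sin (π*n*x))).tsum_eq
    rw [setIntegral_congr_fun measurableSet_Ioi step]
    exact integral_ofReal
  rw [hsum_eq] at hhs
  rw [← hhs.tsum_eq]
  have hterm : ∀ k : ℕ, ∫ x in Ioi (0:ℝ), F k x
      = Complex.I / (8*(π:ℂ)^2) * (((1 + Complex.I * (n:ℂ) / 2 + k)^2)⁻¹
          - ((1 - Complex.I * (n:ℂ) / 2 + k)^2)⁻¹) := fun k => aux_term n k
  rw [tsum_congr hterm, tsum_mul_left]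
  congr 1
  have hsp : Summable (fun k : ℕ => ((1 + Complex.I * (n:ℂ) / 2 + k)^2)⁻¹) :=
    aux_summable (by simp)
  have hsm : Summable (fun k : ℕ => ((1 - Complex.I * (n:ℂ) / 2 + k)^2)⁻¹) :=
    aux_summable (by simp)
  rw [Summable.tsum_sub hsp hsm, trigamma_eq, trigamma_eq]
end

section
/- For a natural number m ≥ 1 and real n with 0 < n < 2: ∫₀^∞ x^m cos(πnx)/(e^{2πx}-1) dx = (√π/(2π)^{m+1}) Σ_{k=0}^∞ (k+1)^{-(m+1)} · Σ_{ℓ=0}^∞ [Γ(m+1+2ℓ)/(ℓ! Γ(1/2+ℓ))] (-n²/(16(1+k)²))^ℓ. -/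
open Real Set

open MeasureTheory

lemma momInt (p : ℕ) {a : ℝ} (ha : 0 < a) :
    ∫ x in Ioi (0:ℝ), x ^ p * Real.exp (-(a * x)) = p.factorial / a ^ (p+1) := by
  have h := integral_rpow_mul_exp_neg_mul_Ioi (a := (p:ℝ)+1) (r := a) (by positivity) ha
  have h2 : ∫ x in Ioi (0:ℝ), x ^ p * Real.exp (-(a * x))
      = ∫ t in Ioi (0:ℝ), t ^ ((p:ℝ)+1-1) * Real.exp (-(a * t)) := by
    refine setIntegral_congr_fun measurableSet_Ioi (fun t ht => ?_)
    rw [show (p:ℝ)+1-1 = (p:ℝ) by ring, Real.rpow_natCast]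
  have h3 : ((p:ℝ)+1) = ((p+1 : ℕ) : ℝ) := by push_cast; ring
  rw [h2, h, Real.Gamma_nat_eq_factorial, one_div, h3, Real.rpow_natCast (a⁻¹) (p+1),
    inv_pow]
  field_simp

lemma momIntgr (p : ℕ) {a : ℝ} (ha : 0 < a) :
    IntegrableOn (fun x : ℝ => x ^ p * Real.exp (-(a * x))) (Ioi 0) := by
  have h := integrableOn_rpow_mul_exp_neg_mul_rpow (p := 1) (s := (p:ℝ)) (b := a)
    (lt_of_lt_of_le neg_one_lt_zero (Nat.cast_nonneg p)) one_pos ha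
  refine h.congr_fun (fun x hx => ?_) measurableSet_Ioi
  beta_reduce
  rw [Real.rpow_natCast, Real.rpow_one, neg_mul]

lemma factBound (m l : ℕ) : ((l+m).factorial : ℕ) ≤ l.factorial * (l+m)^m := by
  induction m with
  | zero => simp
  | succ m ih =>
    have h1 : (l+(m+1)).factorial = (l+m+1) * (l+m).factorial := by
      rw [show l+(m+1) = (l+m)+1 from rfl, Nat.factorial_succ]
    rw [h1]
    calc (l+m+1) * (l+m).factorial ≤ (l+m+1) * (l.factorial * (l+m)^m) :=
          Nat.mul_le_mul_left _ ih
      _ ≤ l.factorial * (l+(m+1))^(m+1) := by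
          rw [pow_succ]
          have h2 : (l+m)^m ≤ (l+(m+1))^m := Nat.pow_le_pow_left (by omega) m
          calc (l+m+1) * (l.factorial * (l+m)^m)
              = l.factorial * ((l+m)^m * (l+m+1)) := by ring
            _ ≤ l.factorial * ((l+(m+1))^m * (l+(m+1))) := by
                exact Nat.mul_le_mul_left _ (Nat.mul_le_mul h2 (by omega))

set_option maxHeartbeats 2000000 in
lemma sumL (m : ℕ) {r : ℝ} (hr0 : 0 < r) (hr : r < 1) :
    Summable (fun l : ℕ => ((2*l+m).factorial : ℝ) / (2*l).factorial * r ^ l) := by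
  have hgeo : Summable (fun l : ℕ => ((l:ℝ)+1)^m * r ^ l) := by
    have h1 : Summable (fun l : ℕ => ((l+1:ℕ):ℝ)^m * r ^ (l+1)) := by
      have := summable_pow_mul_geometric_of_norm_lt_one (R := ℝ) m
        (r := r) (by rwa [Real.norm_eq_abs, abs_of_pos hr0])
      exact (summable_nat_add_iff 1).2 this
    have h2 := h1.mul_left r⁻¹
    refine h2.congr (fun l => ?_)
    push_cast
    rw [pow_succ]
    field_simp
  have hbig : Summable (fun l : ℕ => ((m+2):ℝ)^m * (((l:ℝ)+1)^m * r ^ l)) :=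
    hgeo.mul_left _
  refine Summable.of_nonneg_of_le (fun l => by positivity) (fun l => ?_) hbig
  have hb : ((2*l+m).factorial : ℝ) / (2*l).factorial ≤ ((2*l+m:ℕ):ℝ)^m := by
    rw [div_le_iff₀ (by positivity)]
    have h1 : ((2*l+m).factorial : ℝ) ≤ (((2*l).factorial * (2*l+m)^m : ℕ) : ℝ) :=
      Nat.cast_le.mpr (factBound m (2*l))
    have h2 : (((2*l).factorial * (2*l+m)^m : ℕ) : ℝ)
        = ((2*l+m:ℕ):ℝ)^m * (2*l).factorial := by push_cast; ring
    linarith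
  calc ((2*l+m).factorial : ℝ) / (2*l).factorial * r ^ l
      ≤ ((2*l+m:ℕ):ℝ)^m * r ^ l := by
        apply mul_le_mul_of_nonneg_right hb (by positivity)
    _ ≤ ((m+2):ℝ)^m * (((l:ℝ)+1)^m * r ^ l) := by
        rw [← mul_assoc, ← mul_pow]
        have h3 : ((2*l+m:ℕ):ℝ) ≤ ((m:ℝ)+2) * ((l:ℝ)+1) := by
          push_cast
          nlinarith [Nat.cast_nonneg (α := ℝ) l, Nat.cast_nonneg (α := ℝ) m]
        exact mul_le_mul_of_nonneg_right
          (pow_le_pow_left₀ (Nat.cast_nonneg _) h3 m) (by positivity)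

set_option maxHeartbeats 2000000 in
lemma cosInt (m : ℕ) {a b : ℝ} (ha : 0 < a) (hb : 0 < b) (hba : b < a) :
    ∫ x in Ioi (0:ℝ), x ^ m * Real.cos (b*x) * Real.exp (-(a*x)) =
      ∑' l : ℕ, ((-1:ℝ)^l * b^(2*l) / (2*l).factorial) *
        ((m+2*l).factorial / a^(m+2*l+1)) := by
  set F : ℕ → ℝ → ℝ := fun l x => ((-1:ℝ)^l * b^(2*l) / (2*l).factorial) *
    (x^(m+2*l) * Real.exp (-(a*x))) with hF
  have hInt : ∀ l, Integrable (F l) (volume.restrict (Ioi 0)) := fun l =>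
    (momIntgr (m+2*l) ha).const_mul _
  have hNormVal : ∀ l, (∫ x in Ioi (0:ℝ), ‖F l x‖)
      = (b^(2*l) / (2*l).factorial) * ((m+2*l).factorial / a^(m+2*l+1)) := by
    intro l
    have hpt : ∀ x ∈ Ioi (0:ℝ), ‖F l x‖
        = (b^(2*l) / (2*l).factorial) * (x^(m+2*l) * Real.exp (-(a*x))) := by
      intro x hx
      have hx0 : 0 < x := hx
      rw [hF]
      simp only [Real.norm_eq_abs, abs_mul, abs_div, abs_pow, abs_neg, abs_one, one_pow,
        Nat.abs_cast, abs_of_pos hb, abs_of_pos hx0, Real.abs_exp, one_mul]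
    rw [setIntegral_congr_fun measurableSet_Ioi hpt, MeasureTheory.integral_const_mul,
      momInt (m+2*l) ha]
  have hSum : Summable (fun l => ∫ x in Ioi (0:ℝ), ‖F l x‖) := by
    have hr0 : (0:ℝ) < (b/a)^2 := by positivity
    have hr1 : (b/a)^2 < 1 := by
      have : b/a < 1 := (div_lt_one ha).2 hba
      nlinarith [div_pos hb ha]
    have base := (sumL m hr0 hr1).mul_left (1 / a^(m+1))
    refine base.congr (fun l => ?_)
    rw [hNormVal l]
    have hfac : ((2*l+m).factorial : ℝ) = ((m+2*l).factorial : ℝ) := by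
      rw [Nat.add_comm]
    rw [hfac, show m+2*l+1 = (m+1) + 2*l by ring, pow_add]
    rw [div_pow, div_pow, ← pow_mul, ← pow_mul]
    field_simp
    ring
  have key := integral_tsum_of_summable_integral_norm hInt hSum
  have hpt2 : ∀ x ∈ Ioi (0:ℝ), x ^ m * Real.cos (b*x) * Real.exp (-(a*x))
      = ∑' l, F l x := by
    intro x hx
    have hc := (Real.hasSum_cos (b*x)).mul_left (x^m * Real.exp (-(a*x)))
    have heq : ∀ l : ℕ, (x^m * Real.exp (-(a*x))) * ((-1)^l * (b*x)^(2*l) / (2*l).factorial)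
        = F l x := by
      intro l
      simp only [hF, mul_pow, pow_add]
      ring
    have hc' : HasSum (fun l => F l x)
        (x^m * Real.exp (-(a*x)) * Real.cos (b*x)) := funext heq ▸ hc
    rw [hc'.tsum_eq]
    ring
  calc ∫ x in Ioi (0:ℝ), x ^ m * Real.cos (b*x) * Real.exp (-(a*x))
      = ∫ x in Ioi (0:ℝ), ∑' l, F l x :=
        setIntegral_congr_fun measurableSet_Ioi hpt2
    _ = ∑' l, ∫ x in Ioi (0:ℝ), F l x := key.symm
    _ = ∑' l : ℕ, ((-1:ℝ)^l * b^(2*l) / (2*l).factorial) *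
        ((m+2*l).factorial / a^(m+2*l+1)) := by
        refine tsum_congr (fun l => ?_)
        rw [hF]
        rw [MeasureTheory.integral_const_mul, momInt (m+2*l) ha]

lemma gammaHalf (l : ℕ) : Real.Gamma (1/2 + l) =
    ((2*l).factorial : ℝ) * Real.sqrt π / (2^(2*l) * l.factorial) := by
  have h := Real.Gamma_mul_Gamma_add_half ((l:ℝ) + 1/2)
  rw [show ((l:ℝ)+1/2) + 1/2 = (l:ℝ)+1 by ring,
    show 2*((l:ℝ)+1/2) = ((2*l:ℕ):ℝ)+1 by push_cast; ring,
    Real.Gamma_nat_eq_factorial, Real.Gamma_nat_eq_factorial,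
    show (2:ℝ) ^ (1 - (((2*l:ℕ):ℝ) + 1)) = ((2:ℝ)^(2*l))⁻¹ by
      rw [show 1 - (((2*l:ℕ):ℝ)+1) = -((2*l:ℕ):ℝ) by push_cast; ring,
        Real.rpow_neg (by norm_num), Real.rpow_natCast]] at h
  rw [show (1:ℝ)/2 + l = (l:ℝ) + 1/2 by ring]
  have hl : (l.factorial : ℝ) ≠ 0 := by positivity
  have h2 : Real.Gamma ((l:ℝ)+1/2) = ((2*l).factorial : ℝ) * ((2:ℝ)^(2*l))⁻¹ * Real.sqrt π / l.factorial :=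
    eq_div_of_mul_eq hl h
  rw [h2]
  field_simp

lemma termId (m l : ℕ) (n K : ℝ) (hn : 0 < n) (hK : 0 < K) :
    ((-1:ℝ)^l * (π*n)^(2*l) / (2*l).factorial) * ((m+2*l).factorial / (2*π*K)^(m+2*l+1))
    = Real.sqrt π / (2*π)^(m+1) * ((1/K^(m+1)) *
        (Real.Gamma ((m:ℝ)+1+2*l) / (l.factorial * Real.Gamma (1/2+l)) *
          (-n^2/(16*K^2))^l)) := by
  rw [show (m:ℝ)+1+2*(l:ℝ) = ((m+2*l:ℕ):ℝ)+1 by push_cast; ring,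
    Real.Gamma_nat_eq_factorial, gammaHalf]
  have hneg : ((-n^2/(16*K^2)))^l = (-1)^l * ((n^2)^l/((2^4)^l*(K^2)^l)) := by
    rw [show (-n^2/(16*K^2)) = -(n^2/(16*K^2)) by ring, neg_pow,
      show (16:ℝ) = 2^4 by norm_num, div_pow, mul_pow]
  rw [hneg, ← pow_mul, ← pow_mul, ← pow_mul]
  have hπ := Real.pi_pos
  have hs : Real.sqrt π ≠ 0 := ne_of_gt (Real.sqrt_pos.mpr hπ)
  have h1 : ((2*l).factorial : ℝ) ≠ 0 := by positivity
  have h2 : (l.factorial : ℝ) ≠ 0 := by positivity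
  have h3 : (π : ℝ) ≠ 0 := ne_of_gt hπ
  have h4 : K ≠ 0 := ne_of_gt hK
  rw [show m+2*l+1 = (m+1)+2*l by ring, pow_add]
  field_simp
  ring

set_option maxHeartbeats 2000000 in
theorem stmt13 (m : ℕ) (hm : 1 ≤ m) (n : ℝ) (hn : 0 < n) (hn2 : n < 2) :
    (∫ x in Ioi (0 : ℝ), x ^ m * Real.cos (π * n * x) / (Real.exp (2 * π * x) - 1)) =
      Real.sqrt π / (2 * π) ^ (m + 1) *
        ∑' k : ℕ, (1 / ((k : ℝ) + 1) ^ (m + 1)) *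
          ∑' l : ℕ, Real.Gamma ((m : ℝ) + 1 + 2 * l) /
            ((l.factorial : ℝ) * Real.Gamma (1 / 2 + l)) *
            (-n ^ 2 / (16 * (1 + (k : ℝ)) ^ 2)) ^ l := by
  have hπ := Real.pi_pos
  have hbpos : 0 < π * n := by positivity
  set G : ℕ → ℝ → ℝ := fun k x => x ^ m * Real.cos (π*n*x) *
    Real.exp (-(2*π*(1+(k:ℝ))*x)) with hGdef
  have hKpos : ∀ k : ℕ, (0:ℝ) < 2*π*(1+(k:ℝ)) := fun k => by positivity
  have hbound : ∀ k : ℕ, ∀ x ∈ Ioi (0:ℝ),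
      ‖G k x‖ ≤ x ^ m * Real.exp (-(2*π*(1+(k:ℝ))*x)) := by
    intro k x hx
    have hx0 : (0:ℝ) < x := hx
    simp only [hGdef, Real.norm_eq_abs, abs_mul, abs_pow, abs_of_pos hx0, Real.abs_exp]
    have h1 := abs_cos_le_one (π*n*x)
    have h2 : (0:ℝ) ≤ x ^ m := by positivity
    have h3 := (Real.exp_pos (-(2*π*(1+(k:ℝ))*x))).le
    calc x ^ m * |Real.cos (π*n*x)| * Real.exp (-(2*π*(1+(k:ℝ))*x))
        ≤ x ^ m * 1 * Real.exp (-(2*π*(1+(k:ℝ))*x)) := by gcongr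
      _ = x ^ m * Real.exp (-(2*π*(1+(k:ℝ))*x)) := by ring
  have hInt : ∀ k : ℕ, Integrable (G k) (volume.restrict (Ioi 0)) := by
    intro k
    refine (momIntgr m (hKpos k)).mono' ?_ ?_
    · apply Continuous.aestronglyMeasurable
      fun_prop
    · filter_upwards [MeasureTheory.ae_restrict_mem measurableSet_Ioi] with x hx
      exact hbound k x hx
  have hNorm : ∀ k : ℕ, (∫ x in Ioi (0:ℝ), ‖G k x‖)
      ≤ (m.factorial : ℝ)/(2*π*(1+(k:ℝ)))^(m+1) := by
    intro k
    rw [← momInt m (hKpos k)]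
    refine MeasureTheory.integral_mono_ae (hInt k).norm (momIntgr m (hKpos k)) ?_
    filter_upwards [MeasureTheory.ae_restrict_mem measurableSet_Ioi] with x hx
    exact hbound k x hx
  have hSum : Summable (fun k : ℕ => ∫ x in Ioi (0:ℝ), ‖G k x‖) := by
    have h1 : Summable (fun k : ℕ => 1/((k:ℝ)+1)^(m+1)) := by
      have h0 := Real.summable_one_div_nat_pow.2 (show 2 ≤ m+1 by omega)
      have := (summable_nat_add_iff 1).2 h0
      refine this.congr (fun k => ?_)
      push_cast
      ring
    have h2 := h1.mul_left ((m.factorial : ℝ)/(2*π)^(m+1))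
    have h3 : Summable (fun k : ℕ => (m.factorial : ℝ)/(2*π*(1+(k:ℝ)))^(m+1)) := by
      refine h2.congr (fun k => ?_)
      rw [mul_pow]
      have hk1 : ((k:ℝ)+1) ≠ 0 := by positivity
      have : ((1:ℝ)+(k:ℝ)) = (k:ℝ)+1 := by ring
      rw [this, show (2*π*((k:ℝ)+1))^(m+1) = (2*π)^(m+1)*((k:ℝ)+1)^(m+1)
        from mul_pow _ _ _, div_mul_div_comm, mul_one, mul_pow]
    exact Summable.of_nonneg_of_le
      (fun k => MeasureTheory.integral_nonneg (fun x => norm_nonneg _)) hNorm h3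
  have hpt : ∀ x ∈ Ioi (0:ℝ),
      x ^ m * Real.cos (π*n*x) / (Real.exp (2*π*x) - 1) = ∑' k, G k x := by
    intro x hx
    have hx0 : (0:ℝ) < x := hx
    set r : ℝ := Real.exp (-(2*π*x)) with hr
    have hr0 : (0:ℝ) ≤ r := (Real.exp_pos _).le
    have hr1 : r < 1 := by
      rw [hr, Real.exp_lt_one_iff]
      nlinarith
    have hgeo := (hasSum_geometric_of_lt_one hr0 hr1).mul_left
      (x ^ m * Real.cos (π*n*x) * r)
    have hterm : (fun k : ℕ => (x ^ m * Real.cos (π*n*x) * r) * r^k) = fun k => G k x := by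
      funext k
      rw [hGdef]
      simp only [hr]
      rw [show -(2*π*(1+(k:ℝ))*x) = (-(2*π*x)) + (k:ℝ)*(-(2*π*x)) by ring,
        Real.exp_add, Real.exp_nat_mul]
      ring
    have hgeo2 : HasSum (fun k => G k x)
        (x ^ m * Real.cos (π*n*x) * r * (1-r)⁻¹) := hterm ▸ hgeo
    rw [hgeo2.tsum_eq]
    have he1 : 1 < Real.exp (2*π*x) := by
      rw [Real.one_lt_exp_iff]
      positivity
    have hene : Real.exp (2*π*x) - 1 ≠ 0 := sub_ne_zero.mpr (ne_of_gt he1)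
    have hrinv : r = (Real.exp (2*π*x))⁻¹ := by
      rw [hr, ← Real.exp_neg]
    have h1r : (1 - r) ≠ 0 := sub_ne_zero.mpr (ne_of_lt hr1).symm
    rw [hrinv] at h1r ⊢
    have hepos := (Real.exp_pos (2*π*x)).ne'
    field_simp
  calc (∫ x in Ioi (0 : ℝ), x ^ m * Real.cos (π * n * x) / (Real.exp (2 * π * x) - 1))
      = ∫ x in Ioi (0:ℝ), ∑' k, G k x :=
        setIntegral_congr_fun measurableSet_Ioi hpt
    _ = ∑' k, ∫ x in Ioi (0:ℝ), G k x :=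
        (integral_tsum_of_summable_integral_norm hInt hSum).symm
    _ = Real.sqrt π / (2 * π) ^ (m + 1) *
        ∑' k : ℕ, (1 / ((k : ℝ) + 1) ^ (m + 1)) *
          ∑' l : ℕ, Real.Gamma ((m : ℝ) + 1 + 2 * l) /
            ((l.factorial : ℝ) * Real.Gamma (1 / 2 + l)) *
            (-n ^ 2 / (16 * (1 + (k : ℝ)) ^ 2)) ^ l := by
        rw [← tsum_mul_left]
        refine tsum_congr (fun k => ?_)
        have hba : π * n < 2*π*(1+(k:ℝ)) := by nlinarith [Nat.cast_nonneg (α := ℝ) k]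
        rw [show (∫ x in Ioi (0:ℝ), G k x) =
            ∫ x in Ioi (0:ℝ), x ^ m * Real.cos ((π*n)*x) * Real.exp (-((2*π*(1+(k:ℝ)))*x))
            from by rw [hGdef]]
        rw [cosInt m (hKpos k) hbpos hba]
        rw [show ((k:ℝ)+1) = 1+(k:ℝ) by ring]
        rw [← tsum_mul_left, ← tsum_mul_left]
        exact tsum_congr (fun l => termId m l n (1+(k:ℝ)) hn (by positivity))
end

section
/- For a natural number m ≥ 1 and real n with 0 < n < 2: ∫₀^∞ x^m sin(πnx)/(e^{2πx}-1) dx = (√π n/(4(2π)^{m+1})) Σ_{k=0}^∞ (k+1)^{-(m+2)} · Σ_{ℓ=0}^∞ [Γ(m+2+2ℓ)/(ℓ! Γ(3/2+ℓ))] (-n²/(16(1+k)²))^ℓ. -/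
open Real Set MeasureTheory

lemma aux_integrable_pow_exp (p : ℕ) {r : ℝ} (hr : 0 < r) :
    IntegrableOn (fun x : ℝ => x ^ p * Real.exp (-(r * x))) (Ioi 0) := by
  have h := integrableOn_rpow_mul_exp_neg_mul_rpow (p := 1) (s := p) (b := r)
    (lt_of_lt_of_le (by norm_num) (Nat.cast_nonneg p)) one_pos hr
  refine h.congr_fun (fun x hx => ?_) measurableSet_Ioi
  dsimp only
  rw [Real.rpow_natCast, Real.rpow_one, neg_mul]

lemma aux_integral_pow_exp (p : ℕ) {r : ℝ} (hr : 0 < r) :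
    ∫ x in Ioi (0:ℝ), x ^ p * Real.exp (-(r * x))
      = (Nat.factorial p : ℝ) / r ^ (p + 1) := by
  have h := integral_rpow_mul_exp_neg_mul_Ioi (a := (p : ℝ) + 1) (by positivity) hr
  rw [show ((p:ℝ) + 1 - 1) = (p:ℝ) by ring, Real.Gamma_nat_eq_factorial] at h
  have h2 : ∫ x in Ioi (0:ℝ), x ^ p * Real.exp (-(r * x))
      = ∫ t in Ioi (0:ℝ), t ^ (p:ℝ) * Real.exp (-(r * t)) := by
    refine setIntegral_congr_fun measurableSet_Ioi (fun x hx => ?_)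
    rw [Real.rpow_natCast]
  rw [h2, h, show ((p:ℝ) + 1) = ((p + 1 : ℕ) : ℝ) by push_cast; ring,
    Real.rpow_natCast, div_pow, one_pow]
  ring

lemma aux_fact_le (p m : ℕ) : Nat.factorial (p + m) ≤ Nat.factorial p * (p + m) ^ m := by
  induction m with
  | zero => simp
  | succ m ih =>
    rw [show p + (m + 1) = (p + m) + 1 from rfl, Nat.factorial_succ]
    calc (p + m + 1) * Nat.factorial (p + m)
        ≤ (p + m + 1) * (Nat.factorial p * (p + m) ^ m) := Nat.mul_le_mul_left _ ih
      _ ≤ (p + m + 1) * (Nat.factorial p * (p + m + 1) ^ m) :=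
          Nat.mul_le_mul_left _ (Nat.mul_le_mul_left _
            (Nat.pow_le_pow_left (Nat.le_succ _) m))
      _ = Nat.factorial p * (p + m + 1) ^ (m + 1) := by ring

lemma aux_gamma (l : ℕ) :
    Real.Gamma (3 / 2 + l) = Real.sqrt π * (Nat.factorial (2 * l + 1) : ℝ)
      / ((Nat.factorial l : ℝ) * 4 ^ l * 2) := by
  induction l with
  | zero =>
    rw [show ((0:ℕ):ℝ) = 0 by norm_num]
    rw [show (3/2 : ℝ) + 0 = 1/2 + 1 by norm_num, Real.Gamma_add_one (by norm_num),
      Real.Gamma_one_half_eq]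
    norm_num
    ring
  | succ l ih =>
    have h1 : (3/2 : ℝ) + ((l + 1 : ℕ) : ℝ) = (3/2 + l) + 1 := by push_cast; ring
    rw [h1, Real.Gamma_add_one (by positivity), ih]
    have hf : (Nat.factorial (2 * (l + 1) + 1) : ℝ)
        = (2*l+3) * ((2*l+2) * (Nat.factorial (2*l+1) : ℝ)) := by
      rw [show 2*(l+1)+1 = (2*l+2)+1 by ring, Nat.factorial_succ,
        show 2*l+2 = (2*l+1)+1 by ring, Nat.factorial_succ]
      push_cast; ring
    have hg : (Nat.factorial (l + 1) : ℝ) = (l + 1) * (Nat.factorial l : ℝ) := by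
      rw [Nat.factorial_succ]; push_cast; ring
    rw [hf, hg]
    have hl : (Nat.factorial l : ℝ) ≠ 0 := Nat.cast_ne_zero.2 (Nat.factorial_ne_zero l)
    push_cast
    field_simp
    ring


lemma aux_summable_s14 (m : ℕ) {a b : ℝ} (hb : 0 < b) (hab : b < a) :
    Summable (fun l : ℕ => (b ^ (2*l+1) / (Nat.factorial (2*l+1) : ℝ)) *
      ((Nat.factorial (m+2*l+1) : ℝ) / a ^ (m+2*l+2))) := by
  have ha : 0 < a := hb.trans hab
  set q : ℝ := (b/a)^2 with hq
  have hba : 0 < b / a := div_pos hb ha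
  have hba1 : b / a < 1 := (div_lt_one ha).2 hab
  have hq0 : 0 < q := pow_pos hba 2
  have hq1 : q < 1 := pow_lt_one₀ hba.le hba1 (by norm_num)
  have hgeo : Summable (fun l : ℕ => ((l:ℝ)+1)^m * q^l) := by
    have h0 := summable_pow_mul_geometric_of_norm_lt_one (R := ℝ) m
      (by rwa [Real.norm_eq_abs, abs_of_pos hq0])
    have h1 := (_root_.summable_nat_add_iff 1).mpr h0
    refine (h1.mul_left q⁻¹).congr fun l => ?_
    push_cast
    rw [pow_succ]
    field_simp
  set C : ℝ := ((m:ℝ)+3)^m * ((b/a) / a^(m+1)) with hC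
  refine Summable.of_nonneg_of_le (fun l => by positivity) (fun l => ?_) (hgeo.mul_left C)
  have key : (b ^ (2*l+1) / (Nat.factorial (2*l+1) : ℝ)) *
      ((Nat.factorial (m+2*l+1) : ℝ) / a ^ (m+2*l+2))
      = ((Nat.factorial (m+2*l+1) : ℝ) / (Nat.factorial (2*l+1) : ℝ)) *
        ((b/a) * q^l / a^(m+1)) := by
    have ha' : a ≠ 0 := ha.ne'
    have hf : ((Nat.factorial (2*l+1) : ℕ) : ℝ) ≠ 0 :=
      Nat.cast_ne_zero.2 (Nat.factorial_ne_zero _)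
    rw [hq, div_pow, div_pow]
    field_simp
    ring
  rw [key]
  have hfr : ((Nat.factorial (m+2*l+1) : ℕ) : ℝ) / (Nat.factorial (2*l+1) : ℝ)
      ≤ (((m:ℝ)+3) * ((l:ℝ)+1))^m := by
    rw [div_le_iff₀ (by positivity)]
    have h1 : (Nat.factorial (m+2*l+1) : ℕ) ≤ Nat.factorial (2*l+1) * ((m+3) * (l+1))^m := by
      calc Nat.factorial (m+2*l+1) = Nat.factorial ((2*l+1) + m) := by ring_nf
        _ ≤ Nat.factorial (2*l+1) * ((2*l+1) + m)^m := aux_fact_le _ _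
        _ ≤ Nat.factorial (2*l+1) * ((m+3) * (l+1))^m := by
            refine Nat.mul_le_mul_left _ (Nat.pow_le_pow_left (by nlinarith) m)
    calc ((Nat.factorial (m+2*l+1) : ℕ) : ℝ)
        ≤ ((Nat.factorial (2*l+1) * ((m+3) * (l+1))^m : ℕ) : ℝ) := by exact_mod_cast h1
      _ = (((m:ℝ)+3) * ((l:ℝ)+1))^m * (Nat.factorial (2*l+1) : ℝ) := by push_cast; ring
  calc ((Nat.factorial (m+2*l+1) : ℝ) / (Nat.factorial (2*l+1) : ℝ)) *
        ((b/a) * q^l / a^(m+1))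
      ≤ (((m:ℝ)+3) * ((l:ℝ)+1))^m * ((b/a) * q^l / a^(m+1)) := by
        refine mul_le_mul_of_nonneg_right hfr (by positivity)
    _ = C * (((l:ℝ)+1)^m * q^l) := by rw [hC, mul_pow]; ring

lemma aux_inner (m : ℕ) {a b : ℝ} (hb : 0 < b) (hab : b < a) :
    HasSum (fun l : ℕ => (-1:ℝ)^l * b^(2*l+1) / (Nat.factorial (2*l+1) : ℝ) *
        ((Nat.factorial (m+2*l+1) : ℝ) / a^(m+2*l+2)))
      (∫ x in Ioi (0:ℝ), x^m * Real.sin (b*x) * Real.exp (-(a*x))) := by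
  have ha : 0 < a := hb.trans hab
  set F : ℕ → ℝ → ℝ := fun l x =>
    ((-1:ℝ)^l * b^(2*l+1) / (Nat.factorial (2*l+1) : ℝ)) *
      (x^(m+2*l+1) * Real.exp (-(a*x))) with hF
  have hInt : ∀ l, Integrable (F l) (volume.restrict (Ioi 0)) := fun l =>
    (aux_integrable_pow_exp (m+2*l+1) ha).const_mul _
  have hnorm : ∀ l : ℕ, (∫ x in Ioi (0:ℝ), ‖F l x‖)
      = (b^(2*l+1) / (Nat.factorial (2*l+1) : ℝ)) *
        ((Nat.factorial (m+2*l+1) : ℝ) / a^(m+2*l+2)) := by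
    intro l
    have h1 : ∀ x ∈ Ioi (0:ℝ), ‖F l x‖
        = (b^(2*l+1) / (Nat.factorial (2*l+1) : ℝ)) *
          (x^(m+2*l+1) * Real.exp (-(a*x))) := by
      intro x hx
      have hx0 : (0:ℝ) < x := hx
      have hfp : (0:ℝ) < (Nat.factorial (2*l+1) : ℝ) := by
        exact_mod_cast Nat.factorial_pos _
      rw [hF, Real.norm_eq_abs, abs_mul, abs_div, abs_mul, abs_pow, abs_neg, abs_one,
        one_pow, one_mul, abs_of_pos (pow_pos hb _), abs_of_pos hfp,
        abs_of_pos (by positivity : (0:ℝ) < x^(m+2*l+1) * Real.exp (-(a*x)))]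
    rw [setIntegral_congr_fun measurableSet_Ioi h1, integral_const_mul,
      aux_integral_pow_exp _ ha]
  have hsum : Summable fun l : ℕ => ∫ x in Ioi (0:ℝ), ‖F l x‖ :=
    (aux_summable_s14 m hb hab).congr fun l => (hnorm l).symm
  have H := MeasureTheory.hasSum_integral_of_summable_integral_norm hInt hsum
  have h2 : (∫ x in Ioi (0:ℝ), ∑' l, F l x)
      = ∫ x in Ioi (0:ℝ), x^m * Real.sin (b*x) * Real.exp (-(a*x)) := by
    refine setIntegral_congr_fun measurableSet_Ioi (fun x _ => ?_)
    have hs := (Real.hasSum_sin (b*x)).mul_left (x^m * Real.exp (-(a*x)))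
    have heq : (fun l : ℕ => (x^m * Real.exp (-(a*x))) *
        ((-1:ℝ)^l * (b*x)^(2*l+1) / ((Nat.factorial (2*l+1) : ℕ) : ℝ))) = fun l => F l x := by
      funext l
      simp only [hF]
      rw [mul_pow, show m+2*l+1 = m+(2*l+1) by ring, pow_add]
      ring
    rw [heq] at hs
    rw [hs.tsum_eq]
    ring
  have h3 : (fun l : ℕ => ∫ x in Ioi (0:ℝ), F l x)
      = fun l : ℕ => (-1:ℝ)^l * b^(2*l+1) / (Nat.factorial (2*l+1) : ℝ) *
        ((Nat.factorial (m+2*l+1) : ℝ) / a^(m+2*l+2)) := by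
    funext l
    simp only [hF]
    rw [integral_const_mul, aux_integral_pow_exp _ ha]
  rw [h3, h2] at H
  exact H

lemma aux_outer (m : ℕ) (hm : 1 ≤ m) (b : ℝ) :
    HasSum (fun k : ℕ => ∫ x in Ioi (0:ℝ),
        x^m * Real.sin (b*x) * Real.exp (-(2*π*((k:ℝ)+1)*x)))
      (∫ x in Ioi (0:ℝ), x^m * Real.sin (b*x) / (Real.exp (2*π*x) - 1)) := by
  have hπ : (0:ℝ) < π := Real.pi_pos
  set F : ℕ → ℝ → ℝ := fun k x => x^m * Real.sin (b*x) * Real.exp (-(2*π*((k:ℝ)+1)*x))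
    with hF
  have hak : ∀ k : ℕ, (0:ℝ) < 2*π*((k:ℝ)+1) := fun k => by positivity
  have hbd : ∀ k : ℕ, ∀ x ∈ Ioi (0:ℝ),
      ‖F k x‖ ≤ x^m * Real.exp (-(2*π*((k:ℝ)+1)*x)) := by
    intro k x hx
    have hx0 : (0:ℝ) < x := hx
    rw [hF, Real.norm_eq_abs, abs_mul, abs_mul, abs_pow, abs_of_pos hx0, Real.abs_exp]
    have h1 : |Real.sin (b*x)| ≤ 1 := Real.abs_sin_le_one _
    calc x^m * |Real.sin (b*x)| * Real.exp (-(2*π*((k:ℝ)+1)*x))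
        ≤ x^m * 1 * Real.exp (-(2*π*((k:ℝ)+1)*x)) := by gcongr
      _ = x^m * Real.exp (-(2*π*((k:ℝ)+1)*x)) := by ring
  have hInt : ∀ k, Integrable (F k) (volume.restrict (Ioi 0)) := by
    intro k
    refine Integrable.mono' (aux_integrable_pow_exp m (hak k)) ?_ ?_
    · exact (Continuous.aestronglyMeasurable (by fun_prop))
    · exact (ae_restrict_iff' measurableSet_Ioi).2 (ae_of_all _ (hbd k))
  have hile : ∀ k : ℕ, (∫ x in Ioi (0:ℝ), ‖F k x‖)
      ≤ (Nat.factorial m : ℝ) / (2*π)^(m+1) * (1/((k:ℝ)+1)^(m+1)) := by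
    intro k
    have h1 : (∫ x in Ioi (0:ℝ), ‖F k x‖)
        ≤ ∫ x in Ioi (0:ℝ), x^m * Real.exp (-(2*π*((k:ℝ)+1)*x)) := by
      refine integral_mono_of_nonneg (ae_of_all _ fun x => norm_nonneg _)
        (aux_integrable_pow_exp m (hak k)) ?_
      exact (ae_restrict_iff' measurableSet_Ioi).2 (ae_of_all _ (hbd k))
    rw [aux_integral_pow_exp m (hak k)] at h1
    calc (∫ x in Ioi (0:ℝ), ‖F k x‖)
        ≤ (Nat.factorial m : ℝ) / (2*π*((k:ℝ)+1))^(m+1) := h1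
      _ = (Nat.factorial m : ℝ) / (2*π)^(m+1) * (1/((k:ℝ)+1)^(m+1)) := by
          have hk1 : ((k:ℝ)+1) ≠ 0 := by positivity
          rw [mul_pow, div_mul_eq_div_div]
          ring
  have hsum : Summable fun k : ℕ => ∫ x in Ioi (0:ℝ), ‖F k x‖ := by
    refine Summable.of_nonneg_of_le
      (fun k => integral_nonneg fun x => norm_nonneg _) hile ?_
    have h0 : Summable (fun n : ℕ => 1/(n:ℝ)^(m+1)) :=
      summable_one_div_nat_pow.mpr (by omega)
    have h1 := (_root_.summable_nat_add_iff 1).mpr h0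
    refine ((h1.congr fun k => ?_).mul_left _)
    push_cast
    ring
  have H := MeasureTheory.hasSum_integral_of_summable_integral_norm hInt hsum
  have h2 : (∫ x in Ioi (0:ℝ), ∑' k, F k x)
      = ∫ x in Ioi (0:ℝ), x^m * Real.sin (b*x) / (Real.exp (2*π*x) - 1) := by
    refine setIntegral_congr_fun measurableSet_Ioi (fun x hx => ?_)
    have hx0 : (0:ℝ) < x := hx
    set r : ℝ := Real.exp (-(2*π*x)) with hr
    have hr1 : r < 1 := by
      rw [hr, Real.exp_lt_one_iff]
      nlinarith
    have hE : 1 < Real.exp (2*π*x) := by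
      calc (1:ℝ) = Real.exp 0 := Real.exp_zero.symm
        _ < Real.exp (2*π*x) := Real.exp_lt_exp.mpr (by positivity)
    have hgeom := (hasSum_geometric_of_lt_one (Real.exp_pos _).le hr1).mul_left
      (x^m * Real.sin (b*x) * r)
    have heq : (fun k : ℕ => (x^m * Real.sin (b*x) * r) * r^k) = fun k => F k x := by
      funext k
      simp only [hF]
      rw [show -(2*π*((k:ℝ)+1)*x) = ((k+1:ℕ):ℝ) * (-(2*π*x)) by push_cast; ring,
        Real.exp_nat_mul, ← hr, pow_succ]
      ring
    rw [heq] at hgeom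
    rw [hgeom.tsum_eq, hr, Real.exp_neg]
    have hE0 : Real.exp (2*π*x) ≠ 0 := (Real.exp_pos _).ne'
    have hE1 : Real.exp (2*π*x) - 1 ≠ 0 := by nlinarith
    field_simp
  rw [h2] at H
  exact H

lemma aux_key (m k l : ℕ) {n : ℝ} (hn : 0 < n) :
    (-1:ℝ)^l * (π*n)^(2*l+1) / (Nat.factorial (2*l+1) : ℝ) *
      ((Nat.factorial (m+2*l+1) : ℝ) / (2*π*((k:ℝ)+1))^(m+2*l+2))
    = (Real.sqrt π * n / (4*(2*π)^(m+1))) *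
      ((1/((k:ℝ)+1)^(m+2)) * (Real.Gamma ((m:ℝ)+2+2*l) /
        ((Nat.factorial l : ℝ) * Real.Gamma (3/2+l)) *
        (-n^2/(16*(1+(k:ℝ))^2))^l)) := by
  have hπ : (0:ℝ) < π := Real.pi_pos
  have hsπ : Real.sqrt π ≠ 0 := by positivity
  have hK : ((k:ℝ)+1) ≠ 0 := by positivity
  have hf1 : (Nat.factorial (2*l+1) : ℝ) ≠ 0 := by
    exact_mod_cast (Nat.factorial_ne_zero _)
  have hf2 : (Nat.factorial l : ℝ) ≠ 0 := by
    exact_mod_cast (Nat.factorial_ne_zero _)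
  rw [show (m:ℝ)+2+2*l = ((m+2*l+1 : ℕ):ℝ)+1 by push_cast; ring,
    Real.Gamma_nat_eq_factorial, aux_gamma]
  rw [show (1+(k:ℝ)) = ((k:ℝ)+1) by ring]
  rw [show (-n^2/(16*((k:ℝ)+1)^2)) = -(n^2/((4*4)*((k:ℝ)+1)^2)) by
      rw [neg_div]; norm_num,
    neg_pow (n^2/((4*4)*((k:ℝ)+1)^2)) l, div_pow, mul_pow (4*4 : ℝ) (((k:ℝ)+1)^2) l, mul_pow (4:ℝ) 4 l]
  rw [mul_pow (2*π) ((k:ℝ)+1)]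
  obtain ⟨K, hKdef⟩ : ∃ K : ℝ, ((k:ℝ)+1) = K := ⟨_, rfl⟩
  rw [hKdef] at hK ⊢
  have h4 : (4:ℝ)^(l*2) = 2^(l*2)*4^l := by
    rw [pow_mul, pow_mul, show (4:ℝ)^l = 2^l*2^l by rw [← mul_pow]; norm_num]
    ring
  field_simp
  ring_nf
  rw [show (2:ℝ)^(l*2) = 4^l by rw [pow_mul']; norm_num]
  ring

theorem stmt14 (m : ℕ) (hm : 1 ≤ m) (n : ℝ) (hn : 0 < n) (hn2 : n < 2) :
    (∫ x in Ioi (0 : ℝ), x ^ m * Real.sin (π * n * x) / (Real.exp (2 * π * x) - 1)) =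
      Real.sqrt π * n / (4 * (2 * π) ^ (m + 1)) *
        ∑' k : ℕ, (1 / ((k : ℝ) + 1) ^ (m + 2)) *
          ∑' l : ℕ, Real.Gamma ((m : ℝ) + 2 + 2 * l) /
            ((l.factorial : ℝ) * Real.Gamma (3 / 2 + l)) *
            (-n ^ 2 / (16 * (1 + (k : ℝ)) ^ 2)) ^ l := by
  have hπ : (0:ℝ) < π := Real.pi_pos
  have hb : 0 < π * n := by positivity
  have houter := aux_outer m hm (π * n)
  rw [← houter.tsum_eq]
  have step : ∀ k : ℕ, (∫ x in Ioi (0:ℝ),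
      x^m * Real.sin (π*n*x) * Real.exp (-(2*π*((k:ℝ)+1)*x)))
      = (Real.sqrt π * n / (4*(2*π)^(m+1))) * ((1/((k:ℝ)+1)^(m+2)) *
        ∑' l : ℕ, Real.Gamma ((m:ℝ)+2+2*l) /
          ((l.factorial : ℝ) * Real.Gamma (3/2+l)) *
          (-n^2/(16*(1+(k:ℝ))^2))^l) := by
    intro k
    have hab : π*n < 2*π*((k:ℝ)+1) := by nlinarith [show (0:ℝ) ≤ (k:ℝ) from Nat.cast_nonneg k]
    have hi := aux_inner m hb hab
    rw [← hi.tsum_eq, tsum_congr (fun l => aux_key m k l hn), tsum_mul_left, tsum_mul_left]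
  rw [tsum_congr step, tsum_mul_left]
end

section
/- For real n with 0 < n < 2: Σ_{k=0}^∞ (1+k)^{-3} · Σ_{ℓ=0}^∞ [Γ(3+2ℓ)/(ℓ! Γ(3/2+ℓ))] (-n²/(16(1+k)²))^ℓ = (2i/(√π n)) · [ψ'(1 + in/2) - ψ'(1 - in/2)]. -/
open Complex Real


lemma gamma_ratio (l : ℕ) :
    Real.Gamma (3 + 2 * l) / ((l.factorial : ℝ) * Real.Gamma (3 / 2 + l)) =
    4 * ((l : ℝ) + 1) * 4 ^ l / Real.sqrt π := by
  have hd := Real.Gamma_mul_Gamma_add_half (3 / 2 + l)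
  have h1 : (3 / 2 + (l : ℝ)) + 1 / 2 = ((l + 1 : ℕ) : ℝ) + 1 := by push_cast; ring
  have h2 : 2 * (3 / 2 + (l : ℝ)) = 3 + 2 * l := by ring
  rw [h1, h2, Real.Gamma_nat_eq_factorial] at hd
  have h3 : (1 : ℝ) - (3 + 2 * (l : ℝ)) = -2 - 2 * l := by ring
  rw [h3] at hd
  have hpow : ((2 : ℝ)) ^ ((-2 : ℝ) - 2 * l) = (4 * 4 ^ l)⁻¹ := by
    rw [Real.rpow_sub two_pos, Real.rpow_mul (by norm_num), Real.rpow_natCast,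
      Real.rpow_neg (by norm_num)]
    norm_num [Real.rpow_two]
    ring
  rw [hpow] at hd
  have hG : 0 < Real.Gamma (3 / 2 + l) := Real.Gamma_pos_of_pos (by positivity)
  have hsπ : 0 < Real.sqrt π := Real.sqrt_pos.mpr Real.pi_pos
  have hfac : ((l + 1).factorial : ℝ) = ((l : ℝ) + 1) * l.factorial := by
    rw [Nat.factorial_succ]; push_cast; ring
  rw [hfac] at hd
  have hl : (l.factorial : ℝ) ≠ 0 := by positivity
  have hΓ3 : Real.Gamma (3 + 2 * (l : ℝ)) =
      Real.Gamma (3 / 2 + l) * (((l : ℝ) + 1) * l.factorial) * (4 * 4 ^ l) / Real.sqrt π := by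
    have h4 : (0:ℝ) < 4 * 4 ^ l := by positivity
    field_simp at hd ⊢
    linarith [hd]
  rw [hΓ3]
  field_simp


lemma innerSumEval (n : ℝ) (hn : 0 < n) (hn2 : n < 2) (a : ℝ) (ha : 1 ≤ a) :
    (∑' l : ℕ, Real.Gamma (3 + 2 * l) / ((l.factorial : ℝ) * Real.Gamma (3 / 2 + l)) *
      (-n ^ 2 / (16 * a ^ 2)) ^ l) = 64 * a ^ 4 / (Real.sqrt π * (4 * a ^ 2 + n ^ 2) ^ 2) := by
  have ha0 : (0:ℝ) < a := lt_of_lt_of_le one_pos ha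
  set y : ℝ := -n ^ 2 / (4 * a ^ 2) with hy_def
  have hyval : |y| = n ^ 2 / (4 * a ^ 2) := by
    rw [show y = -(n ^ 2 / (4 * a ^ 2)) by rw [hy_def]; ring, abs_neg,
      _root_.abs_of_nonneg (by positivity)]
  have hy : ‖y‖ < 1 := by
    rw [Real.norm_eq_abs, hyval, div_lt_one (by positivity)]
    nlinarith
  have h1 := hasSum_coe_mul_geometric_of_norm_lt_one hy
  have h2 := hasSum_geometric_of_norm_lt_one hy
  have h1y : (1:ℝ) - y ≠ 0 := by
    have : |y| < 1 := by rwa [Real.norm_eq_abs] at hy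
    intro h; rw [sub_eq_zero] at h; rw [← h] at this; simp at this
  have hsum : (∑' l : ℕ, ((l : ℝ) + 1) * y ^ l) = y / (1 - y) ^ 2 + (1 - y)⁻¹ := by
    rw [show (fun l : ℕ => ((l : ℝ) + 1) * y ^ l) =
      (fun l : ℕ => (l : ℝ) * y ^ l + y ^ l) from funext fun l => by ring]
    exact (h1.add h2).tsum_eq
  have hterm : ∀ l : ℕ, Real.Gamma (3 + 2 * l) / ((l.factorial : ℝ) * Real.Gamma (3 / 2 + l)) *
      (-n ^ 2 / (16 * a ^ 2)) ^ l = (4 / Real.sqrt π) * (((l : ℝ) + 1) * y ^ l) := by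
    intro l
    rw [gamma_ratio l]
    have : y ^ l = 4 ^ l * (-n ^ 2 / (16 * a ^ 2)) ^ l := by
      rw [← mul_pow]; congr 1; rw [hy_def]; ring
    rw [this]; ring
  rw [tsum_congr hterm, tsum_mul_left, hsum]
  have h4an : (4 * a ^ 2 + n ^ 2) ≠ 0 := by positivity
  have hsπ : Real.sqrt π ≠ 0 := (Real.sqrt_pos.mpr Real.pi_pos).ne'
  rw [hy_def]
  field_simp
  rw [sub_neg_eq_add, div_eq_iff (pow_ne_zero 2 h4an)]
  ring


lemma summableTri (z : ℂ) (hz : 1 ≤ z.re) : Summable (fun k : ℕ => (z + k) ^ (-2 : ℤ)) := by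
  apply Summable.of_norm
  have hsum : Summable (fun k : ℕ => 1 / ((k : ℝ) + 1) ^ 2) := by
    have := (summable_nat_add_iff (f := fun n : ℕ => 1 / (n : ℝ) ^ 2) 1).2
      (Real.summable_one_div_nat_pow.2 one_lt_two)
    simpa [add_comm] using this
  refine Summable.of_nonneg_of_le (fun _ => norm_nonneg _) (fun k => ?_) hsum
  have hk : ((k : ℝ) + 1) ≤ ‖z + k‖ := by
    have h1 : ((k : ℝ) + 1) ≤ (z + k).re := by
      simp only [Complex.add_re, Complex.natCast_re]
      linarith
    exact le_trans h1 (Complex.re_le_norm _)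
  have hk0 : (0:ℝ) < (k : ℝ) + 1 := by positivity
  rw [norm_zpow]
  have h2 : ‖z + k‖ ^ (-2 : ℤ) = (‖z + k‖ ^ 2)⁻¹ := by rw [zpow_neg]; norm_cast
  rw [h2, one_div]
  gcongr


lemma keyTerm (n : ℝ) (hn : 0 < n) (a : ℝ) (ha : 1 ≤ a) :
    2 * Complex.I / (((Real.sqrt π : ℝ) : ℂ) * n) *
      (((a : ℂ) + Complex.I * n / 2) ^ (-2 : ℤ) - ((a : ℂ) - Complex.I * n / 2) ^ (-2 : ℤ)) =
    ((64 * a / (Real.sqrt π * (4 * a ^ 2 + n ^ 2) ^ 2) : ℝ) : ℂ) := by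
  have ha0 : (0:ℝ) < a := lt_of_lt_of_le one_pos ha
  have hu : ((a : ℂ) + Complex.I * n / 2) ≠ 0 := by
    intro h
    have := congrArg Complex.re h
    simp [Complex.add_re, Complex.div_re, Complex.mul_re] at this
    linarith
  have hv : ((a : ℂ) - Complex.I * n / 2) ≠ 0 := by
    intro h
    have := congrArg Complex.re h
    simp [Complex.sub_re, Complex.div_re, Complex.mul_re] at this
    linarith
  have e1 : ((a : ℂ) + Complex.I * n / 2) ^ (-2 : ℤ) = (((a : ℂ) + Complex.I * n / 2) ^ 2)⁻¹ := by
    rw [zpow_neg]; norm_cast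
  have e2 : ((a : ℂ) - Complex.I * n / 2) ^ (-2 : ℤ) = (((a : ℂ) - Complex.I * n / 2) ^ 2)⁻¹ := by
    rw [zpow_neg]; norm_cast
  rw [e1, e2, inv_sub_inv (pow_ne_zero 2 hu) (pow_ne_zero 2 hv)]
  have hnum : ((a : ℂ) - Complex.I * n / 2) ^ 2 - ((a : ℂ) + Complex.I * n / 2) ^ 2 =
      -2 * Complex.I * a * n := by ring
  have hden : ((a : ℂ) + Complex.I * n / 2) ^ 2 * ((a : ℂ) - Complex.I * n / 2) ^ 2 =
      (((a ^ 2 + n ^ 2 / 4) ^ 2 : ℝ) : ℂ) := by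
    push_cast
    linear_combination (-((n:ℂ)^2/4) * (2*((a:ℂ)^2+(n:ℂ)^2/4) - ((n:ℂ)^2/4)*(Complex.I^2+1))) *
      Complex.I_sq
  rw [hnum, hden]
  have hsπ : Real.sqrt π ≠ 0 := (Real.sqrt_pos.mpr Real.pi_pos).ne'
  have h4an : (4 * a ^ 2 + n ^ 2) ≠ 0 := by positivity
  have hP : (a ^ 2 + n ^ 2 / 4) ≠ 0 := by positivity
  have hnC : (n : ℂ) ≠ 0 := Complex.ofReal_ne_zero.mpr hn.ne'
  have hsπC : ((Real.sqrt π : ℝ) : ℂ) ≠ 0 := Complex.ofReal_ne_zero.mpr hsπ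
  have hPC : (((a ^ 2 + n ^ 2 / 4) ^ 2 : ℝ) : ℂ) ≠ 0 := by
    rw [Complex.ofReal_ne_zero]; positivity
  have hQ : (4*(a:ℂ)^2+(n:ℂ)^2) ≠ 0 := by exact_mod_cast Complex.ofReal_ne_zero.mpr h4an
  push_cast at hPC ⊢
  rw [div_mul_div_comm, div_eq_div_iff (mul_ne_zero (mul_ne_zero hsπC hnC) hPC)
    (mul_ne_zero hsπC (pow_ne_zero 2 hQ))]
  linear_combination (-4*(a:ℂ)*(n:ℂ)*((Real.sqrt π : ℝ):ℂ)*((4*(a:ℂ)^2+(n:ℂ)^2)^2)) *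
    Complex.I_sq


theorem stmt16 (n : ℝ) (hn : 0 < n) (hn2 : n < 2) :
    ((∑' k : ℕ, (1 / (1 + (k : ℝ)) ^ 3) *
        ∑' l : ℕ, Real.Gamma (3 + 2 * l) /
          ((l.factorial : ℝ) * Real.Gamma (3 / 2 + l)) *
          (-n ^ 2 / (16 * (1 + (k : ℝ)) ^ 2)) ^ l : ℝ) : ℂ) =
      2 * Complex.I / (((Real.sqrt π : ℝ) : ℂ) * n) *
        (trigamma (1 + Complex.I * n / 2) - trigamma (1 - Complex.I * n / 2)) := by
  have hsπ : Real.sqrt π ≠ 0 := (Real.sqrt_pos.mpr Real.pi_pos).ne'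
  have hG : ∀ k : ℕ, (1 / (1 + (k : ℝ)) ^ 3) *
      (∑' l : ℕ, Real.Gamma (3 + 2 * l) /
        ((l.factorial : ℝ) * Real.Gamma (3 / 2 + l)) *
        (-n ^ 2 / (16 * (1 + (k : ℝ)) ^ 2)) ^ l) =
      64 * (1 + (k : ℝ)) / (Real.sqrt π * (4 * (1 + (k : ℝ)) ^ 2 + n ^ 2) ^ 2) := by
    intro k
    have hk1 : (1 : ℝ) ≤ 1 + (k : ℝ) := le_add_of_nonneg_right k.cast_nonneg
    rw [innerSumEval n hn hn2 (1 + (k : ℝ)) hk1]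
    have hk0 : (0:ℝ) < 1 + (k : ℝ) := lt_of_lt_of_le one_pos hk1
    have h4 : (4 * (1 + (k : ℝ)) ^ 2 + n ^ 2) ≠ 0 := by positivity
    field_simp
  rw [tsum_congr hG]
  have hs1 := summableTri (1 + Complex.I * n / 2) (by simp)
  have hs2 := summableTri (1 - Complex.I * n / 2) (by simp)
  unfold trigamma
  rw [← Summable.tsum_sub hs1 hs2, ← tsum_mul_left, Complex.ofReal_tsum]
  refine tsum_congr fun k => ?_
  have hk1 : (1 : ℝ) ≤ 1 + (k : ℝ) := le_add_of_nonneg_right k.cast_nonneg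
  have h1 : (1 + Complex.I * n / 2 + (k : ℂ)) = (((1 + (k : ℝ)) : ℝ) : ℂ) + Complex.I * n / 2 := by
    push_cast; ring
  have h2 : (1 - Complex.I * n / 2 + (k : ℂ)) = (((1 + (k : ℝ)) : ℝ) : ℂ) - Complex.I * n / 2 := by
    push_cast; ring
  rw [h1, h2, keyTerm n hn (1 + (k : ℝ)) hk1]
end
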